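/- arXiv:2009.01146 — 8 statements merged into one kernel-verified Lean document; each statement's English description precedes it below -/
import Mathlib

section
/- Let h : ℝ → ℝ be a smooth 2π-periodic function and f : ℝ² → ℝ a smooth 2π-biperiodic function. Then ∂f/∂y(x,y) + f(x,y)·h(x) = 0 for all (x,y) ∈ ℝ² if and only if both ∂f/∂y(x,y) = 0 for all (x,y) and f(x,y)·h(x) = 0 for all (x,y). -/
open Real

/-- A function `u : ℝ² → ℝ` (curried) is smooth if it is `C^∞` as a function on `ℝ × ℝ`. -/
def Smooth2 (u : ℝ → ℝ → ℝ) : Prop :=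
  ContDiff ℝ (⊤ : ℕ∞) fun p : ℝ × ℝ => u p.1 p.2

/-- A function `u : ℝ² → ℝ` is 2π-biperiodic if `u(x+2π, y) = u(x,y) = u(x, y+2π)`. -/
def Biperiodic (u : ℝ → ℝ → ℝ) : Prop :=
  ∀ x y : ℝ, u (x + 2 * π) y = u x y ∧ u x (y + 2 * π) = u x y

/-- A function `v : ℝ → ℝ` is 2π-periodic if `v(x+2π) = v(x)` for all `x`. -/
def Periodic2pi (v : ℝ → ℝ) : Prop := ∀ x : ℝ, v (x + 2 * π) = v x

/-- Partial derivative in the first variable. -/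
noncomputable def pderivX (u : ℝ → ℝ → ℝ) : ℝ → ℝ → ℝ :=
  fun x y => deriv (fun t => u t y) x

/-- Partial derivative in the second variable. -/
noncomputable def pderivY (u : ℝ → ℝ → ℝ) : ℝ → ℝ → ℝ :=
  fun x y => deriv (fun t => u x t) y

/-- For smooth 2π-periodic `h : ℝ → ℝ` and smooth 2π-biperiodic `f : ℝ² → ℝ`, the equation
`∂f/∂y + f·h = 0` holds everywhere iff both `∂f/∂y = 0` and `f·h = 0` hold everywhere. -/
theorem eq_zero_iff_both_zero (h : ℝ → ℝ) (hh : ContDiff ℝ (⊤ : ℕ∞) h) (hhp : Periodic2pi h)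
    (f : ℝ → ℝ → ℝ) (hf : Smooth2 f) (hfp : Biperiodic f) :
    (∀ x y, pderivY f x y + f x y * h x = 0) ↔
    ((∀ x y, pderivY f x y = 0) ∧ (∀ x y, f x y * h x = 0)) := by
  constructor
  · intro H
    have key : ∀ x y, f x y * h x = 0 := by
      intro x
      set c := h x with hc
      have gd : Differentiable ℝ (fun t => f x t) := by
        have hd := hf.differentiable (by simp)
        intro t
        exact (hd (x, t)).comp t (DifferentiableAt.prodMk (differentiableAt_const x) differentiableAt_id)
      have gderiv : ∀ y, deriv (fun t => f x t) y = -(f x y * c) := by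
        intro y; have := H x y; unfold pderivY at this; linarith
      have Fd : ∀ y : ℝ, HasDerivAt (fun y => f x y * Real.exp (c * y)) 0 y := by
        intro y
        have h1 : HasDerivAt (fun t => f x t) (-(f x y * c)) y := by
          rw [← gderiv y]; exact (gd y).hasDerivAt
        have h2 : HasDerivAt (fun t : ℝ => Real.exp (c * t)) (Real.exp (c * y) * c) y := by
          have h2' := ((hasDerivAt_id y).const_mul c).exp
          simpa using h2'
        have := h1.mul h2
        rw [show (0:ℝ) = -(f x y * c) * Real.exp (c * y) + f x y * (Real.exp (c * y) * c) by ring]; exact this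
      have Fconst : ∀ y : ℝ, f x y * Real.exp (c * y) = f x 0 * Real.exp (c * 0) := by
        intro y
        exact is_const_of_deriv_eq_zero (fun y => (Fd y).differentiableAt)
          (fun y => (Fd y).deriv) y 0
      have h0 : f x 0 * (Real.exp (c * (2 * π)) - 1) = 0 := by
        have hper : f x (2 * π) = f x 0 := by simpa using (hfp x 0).2
        have hFc := Fconst (2 * π)
        rw [hper, mul_zero, Real.exp_zero, mul_one] at hFc
        linear_combination hFc
      by_cases hc0 : c = 0
      · intro y; rw [hc0, mul_zero]
      · have hexp : Real.exp (c * (2 * π)) - 1 ≠ 0 := by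
          intro hcontra
          have : Real.exp (c * (2 * π)) = Real.exp 0 := by
            rw [Real.exp_zero]; linarith
          have := Real.exp_injective this
          have hπ := Real.pi_pos
          have : c * (2 * π) ≠ 0 := by positivity
          exact this ‹c * (2 * π) = 0›
        have hf0 : f x 0 = 0 := by
          rcases mul_eq_zero.mp h0 with h' | h'
          · exact h'
          · exact absurd h' hexp
        intro y
        have := Fconst y
        rw [hf0, zero_mul] at this
        have hfy : f x y = 0 := by
          have := mul_eq_zero.mp this
          rcases this with h' | h'
          · exact h'
          · exact absurd h' (Real.exp_ne_zero _)
        rw [hfy, zero_mul]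
    refine ⟨fun x y => ?_, key⟩
    have := H x y
    rw [key x y] at this
    linarith
  · rintro ⟨h1, h2⟩ x y
    rw [h1 x y, h2 x y, add_zero]
end

section
/- Let e : ℝ² → ℝ be a smooth 2π-biperiodic function, and let h : ℝ² → ℝ be a smooth 2π-biperiodic function such that ∂h/∂y(x,y) = e(x,y) whenever ∫₀^{2π} e(x,t) dt = 0. Then a smooth 2π-biperiodic function f : ℝ² → ℝ satisfies ∂f/∂y(x,y) + f(x,y)·e(x,y) = 0 for all (x,y) ∈ ℝ² if and only if: for every x ∈ ℝ the function y ↦ e^{h(x,y)}·f(x,y) is constant, and this constant is 0 whenever ∫₀^{2π} e(x,t) dt ≠ 0. -/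
open Real

lemma slice_diff {u : ℝ → ℝ → ℝ} (hu : Smooth2 u) (x : ℝ) :
    Differentiable ℝ (fun t => u x t) := by
  have : ContDiff ℝ (⊤ : ℕ∞) (fun t : ℝ => u x t) :=
    hu.comp (f := fun t : ℝ => ((x, t) : ℝ × ℝ)) (ContDiff.prodMk contDiff_const contDiff_id)
  exact this.differentiable (by simp)

/-- Let `e` be smooth 2π-biperiodic and `h` smooth 2π-biperiodic with `∂h/∂y(x,y) = e(x,y)`
whenever `∫₀^{2π} e(x,t) dt = 0`. Then a smooth 2π-biperiodic `f` satisfies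
`∂f/∂y + f·e = 0` everywhere iff for every `x` the function `y ↦ e^{h(x,y)} f(x,y)` is
constant, and this constant is `0` whenever `∫₀^{2π} e(x,t) dt ≠ 0`. -/
theorem solution_iff_exp_constant (e : ℝ → ℝ → ℝ) (he : Smooth2 e) (hep : Biperiodic e)
    (h : ℝ → ℝ → ℝ) (hh : Smooth2 h) (hhp : Biperiodic h)
    (hprim : ∀ x : ℝ, (∫ t in (0:ℝ)..(2 * π), e x t) = 0 → ∀ y : ℝ, pderivY h x y = e x y)
    (f : ℝ → ℝ → ℝ) (hf : Smooth2 f) (hfp : Biperiodic f) :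
    (∀ x y, pderivY f x y + f x y * e x y = 0) ↔
    (∀ x : ℝ,
      (∀ y₁ y₂ : ℝ, Real.exp (h x y₁) * f x y₁ = Real.exp (h x y₂) * f x y₂) ∧
      ((∫ t in (0:ℝ)..(2 * π), e x t) ≠ 0 → ∀ y : ℝ, Real.exp (h x y) * f x y = 0)) := by
  have hFdiff : ∀ x, Differentiable ℝ (fun t => f x t) := slice_diff hf
  have hHdiff : ∀ x, Differentiable ℝ (fun t => h x t) := slice_diff hh
  have hEcont : ∀ x, Continuous (fun t => e x t) := fun x =>
    (slice_diff he x).continuous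
  constructor
  · intro hode x
    by_cases hI : (∫ t in (0:ℝ)..(2 * π), e x t) = 0
    · refine ⟨?_, fun hI' => absurd hI hI'⟩
      -- the primitive case: deriv of exp(h) * f is zero
      have hconst : ∀ y₁ y₂ : ℝ,
          Real.exp (h x y₁) * f x y₁ = Real.exp (h x y₂) * f x y₂ := by
        have hd : Differentiable ℝ (fun y => Real.exp (h x y) * f x y) :=
          ((hHdiff x).exp).mul (hFdiff x)
        have hz : ∀ y, deriv (fun y => Real.exp (h x y) * f x y) y = 0 := by
          intro y
          have hH : HasDerivAt (fun t => h x t) (deriv (fun t => h x t) y) y :=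
            ((hHdiff x) y).hasDerivAt
          have hF : HasDerivAt (fun t => f x t) (deriv (fun t => f x t) y) y :=
            ((hFdiff x) y).hasDerivAt
          have hHy := hprim x hI y
          unfold pderivY at hHy
          have h2 := hode x y
          unfold pderivY at h2
          rw [(hH.exp.fun_mul hF).deriv, hHy,
            show deriv (fun t => f x t) y = -(f x y * e x y) by linarith]
          ring
        intro y₁ y₂
        exact is_const_of_deriv_eq_zero hd hz y₁ y₂
      exact hconst
    · -- nonzero mean: f(x, ·) ≡ 0
      have hzero : ∀ y, f x y = 0 := by
        -- G y = ∫_0^y e x t dt; g y = f x y * exp (G y) is constant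
        set G : ℝ → ℝ := fun y => ∫ t in (0:ℝ)..y, e x t with hG
        have hGd : ∀ y, HasDerivAt G (e x y) y := fun y =>
          ((hEcont x).integral_hasStrictDerivAt 0 y).hasDerivAt
        set g : ℝ → ℝ := fun y => f x y * Real.exp (G y) with hgdef
        have hgd : ∀ y, HasDerivAt g
            (deriv (fun t => f x t) y * Real.exp (G y)
              + f x y * (Real.exp (G y) * e x y)) y := fun y =>
          ((hFdiff x y).hasDerivAt).mul (hGd y).exp
        have hgconst : ∀ y₁ y₂, g y₁ = g y₂ := by
          refine is_const_of_deriv_eq_zero (fun y => (hgd y).differentiableAt) ?_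
          intro y
          rw [(hgd y).deriv]
          have h2 := hode x y
          unfold pderivY at h2
          rw [show deriv (fun t => f x t) y = -(f x y * e x y) by linarith]
          ring
        have hG0 : G 0 = 0 := by simp [hG]
        have hG2 : G (2 * π) = ∫ t in (0:ℝ)..(2 * π), e x t := rfl
        have hper : f x (2 * π) = f x 0 := by
          have := (hfp x 0).2; simpa using this
        have hkey : f x 0 * Real.exp (G (2 * π)) = f x 0 := by
          have := hgconst (2 * π) 0
          simp only [hgdef, hG0, Real.exp_zero, mul_one, hper] at this
          exact this
        have hexpne : Real.exp (G (2 * π)) ≠ 1 := by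
          rw [hG2]
          intro hcc
          rw [← Real.exp_zero] at hcc
          exact hI (Real.exp_injective hcc)
        have hf0 : f x 0 = 0 := by
          have hm : f x 0 * (Real.exp (G (2 * π)) - 1) = 0 := by linear_combination hkey
          rcases mul_eq_zero.mp hm with hcc | hcc
          · exact hcc
          · exact absurd (by linarith : Real.exp (G (2 * π)) = 1) hexpne
        intro y
        have := hgconst y 0
        simp only [hgdef, hG0, Real.exp_zero, mul_one, hf0, mul_eq_zero] at this
        rcases this with hc | hc
        · exact hc
        · exact absurd hc (Real.exp_ne_zero _)
      refine ⟨fun y₁ y₂ => by simp [hzero], fun _ y => by rw [hzero y, mul_zero]⟩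
  · intro hc x y
    by_cases hI : (∫ t in (0:ℝ)..(2 * π), e x t) = 0
    · have hgconst := (hc x).1
      have hgeq : (fun t => Real.exp (h x t) * f x t) = fun _ => Real.exp (h x 0) * f x 0 :=
        funext fun t => hgconst t 0
      have hH : HasDerivAt (fun t => h x t) (deriv (fun t => h x t) y) y :=
        ((hHdiff x) y).hasDerivAt
      have hF : HasDerivAt (fun t => f x t) (deriv (fun t => f x t) y) y :=
        ((hFdiff x) y).hasDerivAt
      have hd := (hH.exp.fun_mul hF).deriv
      rw [hgeq, deriv_const] at hd
      have hHy := hprim x hI y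
      unfold pderivY at hHy
      rw [hHy] at hd
      unfold pderivY
      have hep' := Real.exp_pos (h x y)
      nlinarith [hd, hep']
    · have hz : ∀ t, f x t = 0 := by
        intro t
        have := (hc x).2 hI t
        rcases mul_eq_zero.mp this with hc' | hc'
        · exact absurd hc' (Real.exp_ne_zero _)
        · exact hc'
      have : (fun t => f x t) = fun _ => (0:ℝ) := funext hz
      unfold pderivY
      rw [this, deriv_const, hz y, zero_mul, add_zero]
end

section
/- Let c : ℝ² → ℝ be a smooth 2π-biperiodic function such that ∫₀^{2π} c(x,y) dy ≠ 0 for every x ∈ ℝ. Then there exists ε > 0 such that for every smooth 2π-biperiodic function a : ℝ² → ℝ with |∂a/∂x(x,y)| < ε for all (x,y), the only smooth 2π-biperiodic function f : ℝ² → ℝ satisfying ∂f/∂y(x,y) + f(x,y)·(c(x,y) − ∂a/∂x(x,y)) = 0 for all (x,y) ∈ ℝ² is the zero function. -/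
open Real

/-- The partial derivative in the first variable of a smooth function is jointly continuous. -/
lemma continuous_pderivX (a : ℝ → ℝ → ℝ) (ha : Smooth2 a) :
    Continuous (fun p : ℝ × ℝ => pderivX a p.1 p.2) := by
  have hA : ContDiff ℝ (⊤ : ℕ∞) (fun p : ℝ × ℝ => a p.1 p.2) := ha
  have hfd : Continuous (fun p : ℝ × ℝ => fderiv ℝ (fun q : ℝ × ℝ => a q.1 q.2) p) :=
    hA.continuous_fderiv (by simp)
  have key : ∀ p : ℝ × ℝ, pderivX a p.1 p.2
      = fderiv ℝ (fun q : ℝ × ℝ => a q.1 q.2) p (1, 0) := by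
    rintro ⟨x, y⟩
    have h1 : HasDerivAt (fun t : ℝ => (t, y)) ((1 : ℝ), (0 : ℝ)) x := by
      simpa using ((hasDerivAt_id x).prodMk (hasDerivAt_const x y))
    have h2 : HasFDerivAt (fun q : ℝ × ℝ => a q.1 q.2)
        (fderiv ℝ (fun q : ℝ × ℝ => a q.1 q.2) (x, y)) (x, y) :=
      (hA.differentiable (by simp) (x, y)).hasFDerivAt
    have := h2.comp_hasDerivAt x h1
    exact this.deriv
  have : (fun p : ℝ × ℝ => pderivX a p.1 p.2)
      = fun p => fderiv ℝ (fun q : ℝ × ℝ => a q.1 q.2) p (1, 0) := funext key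
  rw [this]
  exact hfd.clm_apply continuous_const

lemma hasDerivAt_pderivY (f : ℝ → ℝ → ℝ) (hf : Smooth2 f) (x y : ℝ) :
    HasDerivAt (fun t => f x t) (pderivY f x y) y := by
  have : DifferentiableAt ℝ (fun t => f x t) y := by
    have : (fun t => f x t) = (fun p : ℝ × ℝ => f p.1 p.2) ∘ (fun t : ℝ => (x, t)) := rfl
    rw [this]
    exact DifferentiableAt.comp y ((hf.differentiable (by simp)) (x, y))
      ((differentiableAt_const x).prodMk differentiableAt_id)
  exact this.hasDerivAt

/-- If `c` is smooth 2π-biperiodic and `∫₀^{2π} c(x,y) dy ≠ 0` for every `x`, then there is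
`ε > 0` such that for every smooth 2π-biperiodic `a` with `|∂a/∂x| < ε` everywhere, the only
smooth 2π-biperiodic solution `f` of `∂f/∂y + f·(c − ∂a/∂x) = 0` is the zero function. -/
theorem small_perturbation_only_zero_solution (c : ℝ → ℝ → ℝ)
    (hc : Smooth2 c) (hcp : Biperiodic c)
    (hint : ∀ x : ℝ, (∫ y in (0:ℝ)..(2 * π), c x y) ≠ 0) :
    ∃ ε > (0:ℝ), ∀ a : ℝ → ℝ → ℝ, Smooth2 a → Biperiodic a →
      (∀ x y, |pderivX a x y| < ε) →
      ∀ f : ℝ → ℝ → ℝ, Smooth2 f → Biperiodic f →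
        (∀ x y, pderivY f x y + f x y * (c x y - pderivX a x y) = 0) →
        ∀ x y, f x y = 0 := by
  have hπ : (0:ℝ) < 2 * π := by positivity
  have hcC : Continuous (fun p : ℝ × ℝ => c p.1 p.2) := hc.continuous
  set g : ℝ → ℝ := fun x => ∫ y in (0:ℝ)..(2 * π), c x y with hgdef
  have hgcont : Continuous g :=
    intervalIntegral.continuous_parametric_intervalIntegral_of_continuous' hcC 0 (2 * π)
  have hgper : Function.Periodic g (2 * π) := fun x =>
    intervalIntegral.integral_congr (fun y _ => (hcp x y).1)
  -- positive lower bound for |g|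
  obtain ⟨x₀, hx₀, hmin⟩ := (isCompact_Icc (a := (0:ℝ)) (b := 2 * π)).exists_isMinOn
    ⟨0, by constructor <;> [rfl; positivity]⟩
    ((continuous_abs.comp hgcont).continuousOn)
  rw [isMinOn_iff] at hmin
  set m := |g x₀| with hmdef
  have hm : 0 < m := abs_pos.mpr (hint x₀)
  have hmle : ∀ x, m ≤ |g x| := by
    intro x
    obtain ⟨y, hy, hxy⟩ := hgper.exists_mem_Ico₀ hπ x
    rw [hxy]
    exact hmin y ⟨hy.1, le_of_lt hy.2⟩
  refine ⟨m / (4 * π), by positivity, ?_⟩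
  intro a ha hap haε f hf hfp hode x y
  -- the coefficient b and its x-slice
  have hbC : Continuous (fun p : ℝ × ℝ => c p.1 p.2 - pderivX a p.1 p.2) :=
    hcC.sub (continuous_pderivX a ha)
  set B : ℝ → ℝ := fun t => c x t - pderivX a x t with hBdef
  have hBcont : Continuous B := by
    have hco : B = (fun p : ℝ × ℝ => c p.1 p.2 - pderivX a p.1 p.2) ∘ (fun t : ℝ => (x, t)) := rfl
    rw [hco]; exact hbC.comp (continuous_const.prodMk continuous_id)
  set J : ℝ → ℝ := fun s => ∫ t in (0:ℝ)..s, B t with hJdef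
  have hJd : ∀ s, HasDerivAt J (B s) s := fun s =>
    intervalIntegral.integral_hasDerivAt_right (hBcont.intervalIntegrable 0 s)
      (hBcont.stronglyMeasurable.stronglyMeasurableAtFilter) hBcont.continuousAt
  set F : ℝ → ℝ := fun s => f x s * Real.exp (J s) with hFdef
  have hFd : ∀ s, HasDerivAt F 0 s := by
    intro s
    have h1 : HasDerivAt (fun t => f x t) (pderivY f x s) s := hasDerivAt_pderivY f hf x s
    have h2 : HasDerivAt (fun t => Real.exp (J t)) (Real.exp (J s) * B s) s :=
      (Real.hasDerivAt_exp (J s)).comp s (hJd s)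
    have h3 := h1.mul h2
    have hzero : pderivY f x s * Real.exp (J s) + f x s * (Real.exp (J s) * B s) = 0 := by
      have hB : B s = c x s - pderivX a x s := rfl
      have h4 : pderivY f x s = -(f x s * B s) := by rw [hB]; linarith [hode x s]
      rw [h4]; ring
    rw [hzero] at h3
    exact h3
  have hFconst : ∀ s t : ℝ, F s = F t :=
    is_const_of_deriv_eq_zero (fun s => (hFd s).differentiableAt) (fun s => (hFd s).deriv)
  -- value of J at 2π is nonzero
  have hIa : |∫ t in (0:ℝ)..(2 * π), pderivX a x t| ≤ m / 2 := by
    have hb : ∀ t ∈ Set.uIoc (0:ℝ) (2 * π), ‖pderivX a x t‖ ≤ m / (4 * π) :=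
      fun t _ => le_of_lt (haε x t)
    have hle := intervalIntegral.norm_integral_le_of_norm_le_const hb
    have h2π : |2 * π - 0| = 2 * π := by rw [sub_zero]; exact abs_of_pos hπ
    rw [h2π] at hle
    calc |∫ t in (0:ℝ)..(2 * π), pderivX a x t| ≤ m / (4 * π) * (2 * π) := hle
      _ = m / 2 := by field_simp; ring
  have hJsplit : J (2 * π) = g x - ∫ t in (0:ℝ)..(2 * π), pderivX a x t := by
    have hcx : Continuous (fun t => c x t) := by
      have hco : (fun t => c x t) = (fun p : ℝ × ℝ => c p.1 p.2) ∘ (fun t : ℝ => (x, t)) := rfl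
      rw [hco]; exact hcC.comp (continuous_const.prodMk continuous_id)
    have hax : Continuous (fun t => pderivX a x t) := by
      have hco : (fun t => pderivX a x t)
          = (fun p : ℝ × ℝ => pderivX a p.1 p.2) ∘ (fun t : ℝ => (x, t)) := rfl
      rw [hco]; exact (continuous_pderivX a ha).comp (continuous_const.prodMk continuous_id)
    simpa using intervalIntegral.integral_sub (hcx.intervalIntegrable 0 (2 * π))
      (hax.intervalIntegrable 0 (2 * π))
  have hJne : J (2 * π) ≠ 0 := by
    intro h0
    have : |g x| ≤ m / 2 := by
      have : g x = ∫ t in (0:ℝ)..(2 * π), pderivX a x t := by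
        have := hJsplit; rw [h0] at this; linarith
      rw [this]; exact hIa
    have := hmle x
    linarith
  -- f x 0 = 0
  have hJ0 : J 0 = 0 := intervalIntegral.integral_same
  have hper2 : f x (0 + 2 * π) = f x 0 := (hfp x 0).2
  have hF0 : F (2 * π) = F 0 := hFconst _ _
  have heq : f x 0 * Real.exp (J (2 * π)) = f x 0 := by
    have : F (2 * π) = f x (2 * π) * Real.exp (J (2 * π)) := rfl
    rw [hF0] at this
    simp only [hJ0, Real.exp_zero, mul_one, hFdef] at this
    have h2 : f x (2 * π) = f x 0 := by simpa using hper2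
    rw [h2] at this
    linarith [this]
  have hx0 : f x 0 = 0 := by
    have hfac : f x 0 * (Real.exp (J (2 * π)) - 1) = 0 := by
      rw [mul_sub, mul_one, heq, sub_self]
    rcases mul_eq_zero.mp hfac with h | h
    · exact h
    · exact absurd (Real.exp_injective (by rw [(by linarith : Real.exp (J (2 * π)) = 1), Real.exp_zero])) hJne
  -- conclude
  have hFy : F y = 0 := by
    rw [hFconst y 0]
    simp [hFdef, hJ0, hx0]
  have := hFy
  have hexp : Real.exp (J y) ≠ 0 := Real.exp_ne_zero _
  have : f x y * Real.exp (J y) = 0 := hFy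
  exact (mul_eq_zero.mp this).resolve_right hexp
end

section
/- If f, g : ℝ² → ℝ are smooth 2π-biperiodic functions satisfying ∂f/∂y(x,y) − f(x,y) = f(x,y)·∂g/∂x(x,y) for all (x,y) ∈ ℝ², then f has a zero, i.e. there exists (x₀, y₀) ∈ ℝ² with f(x₀, y₀) = 0. -/
open Real MeasureTheory

lemma pderivX_hasDerivAt {g : ℝ → ℝ → ℝ} (hg : Smooth2 g) (x y : ℝ) :
    HasDerivAt (fun t => g t y) (pderivX g x y) x := by
  have key : HasDerivAt (fun t => g t y)
      (fderiv ℝ (fun p : ℝ × ℝ => g p.1 p.2) (x, y) (1, 0)) x := by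
    have hline : HasDerivAt (fun t : ℝ => (t, y)) ((1 : ℝ), (0 : ℝ)) x :=
      (hasDerivAt_id x).prodMk (hasDerivAt_const x y)
    exact ((hg.differentiable (by norm_num)) (x, y)).hasFDerivAt.comp_hasDerivAt x hline
  have : deriv (fun t => g t y) x = _ := key.deriv
  rw [pderivX, this]; exact key

lemma pderivY_hasDerivAt {f : ℝ → ℝ → ℝ} (hf : Smooth2 f) (x y : ℝ) :
    HasDerivAt (fun t => f x t) (pderivY f x y) y := by
  have key : HasDerivAt (fun t => f x t)
      (fderiv ℝ (fun p : ℝ × ℝ => f p.1 p.2) (x, y) (0, 1)) y := by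
    have hline : HasDerivAt (fun t : ℝ => (x, t)) ((0 : ℝ), (1 : ℝ)) y :=
      (hasDerivAt_const y x).prodMk (hasDerivAt_id y)
    exact ((hf.differentiable (by norm_num)) (x, y)).hasFDerivAt.comp_hasDerivAt y hline
  have : deriv (fun t => f x t) y = _ := key.deriv
  rw [pderivY, this]; exact key

lemma pderivX_continuous {g : ℝ → ℝ → ℝ} (hg : Smooth2 g) :
    Continuous (fun p : ℝ × ℝ => pderivX g p.1 p.2) := by
  have : Continuous fun p : ℝ × ℝ => fderiv ℝ (fun q : ℝ × ℝ => g q.1 q.2) p (1, 0) :=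
    (hg.continuous_fderiv (by norm_num)).clm_apply continuous_const
  convert this using 2 with p
  have key : HasDerivAt (fun t => g t p.2)
      (fderiv ℝ (fun q : ℝ × ℝ => g q.1 q.2) (p.1, p.2) (1, 0)) p.1 := by
    have hline : HasDerivAt (fun t : ℝ => (t, p.2)) ((1 : ℝ), (0 : ℝ)) p.1 :=
      (hasDerivAt_id p.1).prodMk (hasDerivAt_const p.1 p.2)
    exact ((hg.differentiable (by norm_num)) (p.1, p.2)).hasFDerivAt.comp_hasDerivAt p.1 hline
  exact key.deriv

/-- Any smooth 2π-biperiodic functions `f, g` satisfying `∂f/∂y − f = f·∂g/∂x` everywhere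
are such that `f` has a zero. -/
theorem solution_has_zero (f g : ℝ → ℝ → ℝ)
    (hf : Smooth2 f) (hfp : Biperiodic f) (hg : Smooth2 g) (hgp : Biperiodic g)
    (heq : ∀ x y, pderivY f x y - f x y = f x y * pderivX g x y) :
    ∃ x₀ y₀ : ℝ, f x₀ y₀ = 0 := by
  by_contra hcon
  push_neg at hcon
  have hpi : (0:ℝ) < π := pi_pos
  have h2pi : (0:ℝ) ≤ 2 * π := by linarith
  have hFc : Continuous (fun p : ℝ × ℝ => pderivX g p.1 p.2) := pderivX_continuous hg
  -- derivative of log (f x ·)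
  have hlog : ∀ x y : ℝ, HasDerivAt (fun t => Real.log (f x t)) (1 + pderivX g x y) y := by
    intro x y
    have h1 : HasDerivAt (fun t => Real.log (f x t)) (pderivY f x y / f x y) y :=
      (pderivY_hasDerivAt hf x y).log (hcon x y)
    have h2 : pderivY f x y / f x y = 1 + pderivX g x y := by
      rw [div_eq_iff (hcon x y)]
      have := heq x y
      ring_nf
      ring_nf at this
      linarith
    rwa [h2] at h1
  -- inner integral in y : ∫ y in 0..2π, (1 + ∂x g) dy = 0
  have hinner : ∀ x : ℝ, ∫ y in (0:ℝ)..(2*π), (1 + pderivX g x y) = 0 := by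
    intro x
    have hcontx : Continuous fun y => 1 + pderivX g x y :=
      continuous_const.add (hFc.comp (Continuous.prodMk_right x))
    have := intervalIntegral.integral_eq_sub_of_hasDerivAt (f := fun t => Real.log (f x t))
      (fun t _ => hlog x t) (hcontx.intervalIntegrable 0 (2*π))
    rw [this]
    have hper : f x (2*π) = f x 0 := by
      have := (hfp x 0).2; simpa using this
    simp [hper]
  have hinner' : ∀ x : ℝ, ∫ y in (0:ℝ)..(2*π), pderivX g x y = -(2*π) := by
    intro x
    have hcontx : Continuous fun y => pderivX g x y := hFc.comp (Continuous.prodMk_right x)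
    have hsplit := intervalIntegral.integral_add
      (intervalIntegrable_const (c := (1:ℝ)) (a := 0) (b := 2*π) (μ := volume))
      (hcontx.intervalIntegrable 0 (2*π))
    rw [hinner x, intervalIntegral.integral_const] at hsplit
    have h1 : (2*π - 0) • (1:ℝ) = 2*π := by simp
    rw [h1] at hsplit
    linarith [hsplit]
  -- integral in x : ∫ x in 0..2π, ∂x g = 0 for each y
  have hinX : ∀ y : ℝ, ∫ x in (0:ℝ)..(2*π), pderivX g x y = 0 := by
    intro y
    have hconty : Continuous fun x => pderivX g x y :=
      hFc.comp (continuous_id.prodMk continuous_const)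
    have := intervalIntegral.integral_eq_sub_of_hasDerivAt (f := fun t => g t y)
      (fun t _ => pderivX_hasDerivAt hg t y) (hconty.intervalIntegrable 0 (2*π))
    rw [this]
    have hper : g (2*π) y = g 0 y := by
      have := (hgp 0 y).1; simpa using this
    simp [hper]
  -- Fubini
  set S : Set ℝ := Set.Ioc (0:ℝ) (2*π) with hS
  have hInt : Integrable (Function.uncurry fun x y => pderivX g x y)
      ((volume.restrict S).prod (volume.restrict S)) := by
    rw [Measure.prod_restrict]
    have hcpt : IsCompact (Set.Icc (0:ℝ) (2*π) ×ˢ Set.Icc (0:ℝ) (2*π)) :=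
      isCompact_Icc.prod isCompact_Icc
    have : IntegrableOn (fun p : ℝ × ℝ => pderivX g p.1 p.2)
        (Set.Icc (0:ℝ) (2*π) ×ˢ Set.Icc (0:ℝ) (2*π)) (volume.prod volume) := by
      rw [← Measure.volume_eq_prod]
      exact hFc.continuousOn.integrableOn_compact hcpt
    exact this.mono_set (Set.prod_mono Set.Ioc_subset_Icc_self Set.Ioc_subset_Icc_self)
  have hswap := integral_integral_swap hInt
  have hA : ∫ x in S, ∫ y in S, pderivX g x y = -(2*π) * (2*π) := by
    have : ∀ x : ℝ, ∫ y in S, pderivX g x y = -(2*π) := by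
      intro x
      rw [hS, ← intervalIntegral.integral_of_le h2pi]
      exact hinner' x
    rw [integral_congr_ae (Filter.Eventually.of_forall this), MeasureTheory.integral_const]
    simp [hS, Real.volume_Ioc, ENNReal.toReal_ofReal h2pi, pi_pos.le]
  have hB : ∫ y in S, ∫ x in S, pderivX g x y = 0 := by
    have : ∀ y : ℝ, ∫ x in S, pderivX g x y = 0 := by
      intro y
      rw [hS, ← intervalIntegral.integral_of_le h2pi]
      exact hinX y
    rw [integral_congr_ae (Filter.Eventually.of_forall this)]
    simp
  rw [hA, hB] at hswap
  nlinarith [hswap, hpi]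
end

section
/- Let S be the set of pairs (g, f) of smooth 2π-biperiodic functions ℝ² → ℝ satisfying ∂f/∂y − f = f·∂g/∂x everywhere on ℝ², regarded as a subspace of C(ℝ², ℝ) × C(ℝ², ℝ), where C(ℝ², ℝ) carries the compact-open topology. Then S is contractible: there is a continuous map H : S × [0,1] → S with H(·, 0) the identity of S and H(·, 1) the constant map with value (0, 0). -/
open Real

/-- The set of pairs `(g, f)` of smooth 2π-biperiodic functions satisfying
`∂f/∂y − f = f·∂g/∂x` everywhere, regarded inside `C(ℝ², ℝ) × C(ℝ², ℝ)` with the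
compact-open topology. -/
def solutionSet : Set (C(ℝ × ℝ, ℝ) × C(ℝ × ℝ, ℝ)) :=
  {p | Smooth2 (fun x y => p.1 (x, y)) ∧ Biperiodic (fun x y => p.1 (x, y)) ∧
       Smooth2 (fun x y => p.2 (x, y)) ∧ Biperiodic (fun x y => p.2 (x, y)) ∧
       ∀ x y : ℝ, pderivY (fun x y => p.2 (x, y)) x y - p.2 (x, y) =
         p.2 (x, y) * pderivX (fun x y => p.1 (x, y)) x y}

lemma smooth2_const_mul {u : ℝ → ℝ → ℝ} (h : Smooth2 u) (c : ℝ) :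
    Smooth2 (fun x y => c * u x y) :=
  ContDiff.mul contDiff_const h

lemma biperiodic_const_mul {u : ℝ → ℝ → ℝ} (h : Biperiodic u) (c : ℝ) :
    Biperiodic (fun x y => c * u x y) := by
  intro x y
  exact ⟨by simp only []; rw [(h x y).1], by simp only []; rw [(h x y).2]⟩

lemma scale_mem {p : C(ℝ × ℝ, ℝ) × C(ℝ × ℝ, ℝ)} (hp : p ∈ solutionSet)
    (a b : ℝ) (hab : a ≠ 0 → b = 1) : (b • p.1, a • p.2) ∈ solutionSet := by
  obtain ⟨hg, hgp, hf, hfp, hpde⟩ := hp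
  have hfx : ∀ x : ℝ, Differentiable ℝ (fun t => p.2 (x, t)) := by
    intro x
    exact ((hf.comp ((contDiff_const (c := x)).prodMk contDiff_id)).differentiable (by simp))
  have hgy : ∀ y : ℝ, Differentiable ℝ (fun t => p.1 (t, y)) := by
    intro y
    exact ((hg.comp (contDiff_id.prodMk (contDiff_const (c := y)))).differentiable (by simp))
  have e1 : (fun x y => (b • p.1) (x, y)) = fun x y => b * p.1 (x, y) := by
    funext x y; simp
  have e2 : (fun x y => (a • p.2) (x, y)) = fun x y => a * p.2 (x, y) := by
    funext x y; simp
  refine ⟨?_, ?_, ?_, ?_, ?_⟩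
  · rw [e1]; exact smooth2_const_mul hg b
  · rw [e1]; exact biperiodic_const_mul hgp b
  · rw [e2]; exact smooth2_const_mul hf a
  · rw [e2]; exact biperiodic_const_mul hfp a
  · intro x y
    rcases eq_or_ne a 0 with ha | ha
    · simp [pderivY, e2, ha]
    · have hb := hab ha
      simp only [pderivY, pderivX, ContinuousMap.smul_apply, smul_eq_mul]
      rw [deriv_const_mul _ ((hfx x).differentiableAt),
        deriv_const_mul _ ((hgy y).differentiableAt), hb]
      have := hpde x y
      simp only [pderivY, pderivX] at this
      linear_combination a * this

/-- The solution set `S` is contractible: there is a continuous `H : S × [0,1] → S` with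
`H(·,0) = id_S` and `H(·,1)` the constant map with value `(0, 0)`. -/
theorem solutionSet_contractible :
    ∃ H : solutionSet × unitInterval → solutionSet,
      Continuous H ∧
      (∀ s : solutionSet, H (s, 0) = s) ∧
      (∀ s : solutionSet, (H (s, 1)).val = ((0 : C(ℝ × ℝ, ℝ)), (0 : C(ℝ × ℝ, ℝ)))) := by
  refine ⟨fun q => ⟨(min 1 (2 - 2 * (q.2 : ℝ)) • q.1.val.1,
      max 0 (1 - 2 * (q.2 : ℝ)) • q.1.val.2), ?_⟩, ?_, ?_, ?_⟩
  · refine scale_mem q.1.2 _ _ ?_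
    intro ha
    have h1 : (0 : ℝ) < 1 - 2 * (q.2 : ℝ) := by
      rcases lt_or_ge 0 (1 - 2 * (q.2 : ℝ)) with h | h
      · exact h
      · exact absurd (max_eq_left h) ha
    have : (1 : ℝ) ≤ 2 - 2 * (q.2 : ℝ) := by linarith
    exact min_eq_left this
  · apply Continuous.subtype_mk
    have hc1 : Continuous fun q : solutionSet × unitInterval => (min 1 (2 - 2 * (q.2 : ℝ))) := by
      fun_prop
    have hc2 : Continuous fun q : solutionSet × unitInterval => (max 0 (1 - 2 * (q.2 : ℝ))) := by
      fun_prop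
    exact (hc1.smul ((continuous_fst.subtype_val).fst)).prodMk
      (hc2.smul ((continuous_fst.subtype_val).snd))
  · intro s
    apply Subtype.ext
    have : ((0 : unitInterval) : ℝ) = 0 := rfl
    simp [this]
  · intro s
    have : ((1 : unitInterval) : ℝ) = 1 := rfl
    simp [this]
end

section
/- Let λ be an irrational real number and let c : ℝ² → ℝ be a smooth 2π-biperiodic function. Suppose f : ℝ² → ℝ is a smooth 2π-biperiodic function satisfying λ·∂f/∂x(x,y) + ∂f/∂y(x,y) + f(x,y)·c(x,y) = 0 for all (x,y) ∈ ℝ². Then either f is identically zero, or f has no zeros. Moreover: if f has no zeros, then there exists a smooth 2π-biperiodic function u : ℝ² → ℝ with c = λ·∂u/∂x + ∂u/∂y on ℝ²; and conversely, if c = λ·∂u/∂x + ∂u/∂y for some smooth 2π-biperiodic u, then every such solution f is of the form f(x,y) = C·e^{−u(x,y)} for some constant C ∈ ℝ. -/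
open Real

/- ### Auxiliary lemmas -/

lemma sectX_hasDerivAt (f : ℝ → ℝ → ℝ) (hf : Smooth2 f) (a b : ℝ) :
    HasDerivAt (fun t => f t b) (fderiv ℝ (fun p : ℝ × ℝ => f p.1 p.2) (a, b) (1, 0)) a := by
  have h1 : HasDerivAt (fun s : ℝ => (s, b)) ((1:ℝ), (0:ℝ)) a := by
    simpa using (hasDerivAt_id a).prodMk (hasDerivAt_const a b)
  have h2 : HasFDerivAt (fun p : ℝ × ℝ => f p.1 p.2)
      (fderiv ℝ (fun p : ℝ × ℝ => f p.1 p.2) (a, b)) (a, b) :=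
    ((hf.differentiable (by simp)) (a, b)).hasFDerivAt
  exact h2.comp_hasDerivAt a h1

lemma sectY_hasDerivAt (f : ℝ → ℝ → ℝ) (hf : Smooth2 f) (a b : ℝ) :
    HasDerivAt (fun t => f a t) (fderiv ℝ (fun p : ℝ × ℝ => f p.1 p.2) (a, b) (0, 1)) b := by
  have h1 : HasDerivAt (fun s : ℝ => (a, s)) ((0:ℝ), (1:ℝ)) b := by
    simpa using (hasDerivAt_const b a).prodMk (hasDerivAt_id b)
  have h2 : HasFDerivAt (fun p : ℝ × ℝ => f p.1 p.2)
      (fderiv ℝ (fun p : ℝ × ℝ => f p.1 p.2) (a, b)) (a, b) :=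
    ((hf.differentiable (by simp)) (a, b)).hasFDerivAt
  exact h2.comp_hasDerivAt b h1

lemma pderivX_eq (f : ℝ → ℝ → ℝ) (hf : Smooth2 f) (a b : ℝ) :
    pderivX f a b = fderiv ℝ (fun p : ℝ × ℝ => f p.1 p.2) (a, b) (1, 0) :=
  (sectX_hasDerivAt f hf a b).deriv

lemma pderivY_eq (f : ℝ → ℝ → ℝ) (hf : Smooth2 f) (a b : ℝ) :
    pderivY f a b = fderiv ℝ (fun p : ℝ × ℝ => f p.1 p.2) (a, b) (0, 1) :=
  (sectY_hasDerivAt f hf a b).deriv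

lemma sectX_hasDerivAt' (f : ℝ → ℝ → ℝ) (hf : Smooth2 f) (a b : ℝ) :
    HasDerivAt (fun t => f t b) (pderivX f a b) a := by
  rw [pderivX_eq f hf]; exact sectX_hasDerivAt f hf a b

lemma sectY_hasDerivAt' (f : ℝ → ℝ → ℝ) (hf : Smooth2 f) (a b : ℝ) :
    HasDerivAt (fun t => f a t) (pderivY f a b) b := by
  rw [pderivY_eq f hf]; exact sectY_hasDerivAt f hf a b

/-- Derivative along the characteristic line. -/
lemma char_deriv (f : ℝ → ℝ → ℝ) (hf : Smooth2 f) (l x y t : ℝ) :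
    HasDerivAt (fun s => f (x + l * s) (y + s))
      (l * pderivX f (x + l * t) (y + t) + pderivY f (x + l * t) (y + t)) t := by
  have h1 : HasDerivAt (fun s : ℝ => (x + l * s, y + s)) ((l : ℝ), (1:ℝ)) t := by
    have hx : HasDerivAt (fun s : ℝ => x + l * s) l t := by
      simpa using ((hasDerivAt_id t).const_mul l).const_add x
    have hy : HasDerivAt (fun s : ℝ => y + s) 1 t := by
      simpa using (hasDerivAt_id t).const_add y
    exact hx.prodMk hy
  set F := fun p : ℝ × ℝ => f p.1 p.2
  have h2 : HasFDerivAt F (fderiv ℝ F (x + l * t, y + t)) (x + l * t, y + t) :=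
    ((hf.differentiable (by simp)) _).hasFDerivAt
  have h3 := h2.comp_hasDerivAt t h1
  have h4 : fderiv ℝ F (x + l * t, y + t) (l, 1)
      = l * pderivX f (x + l * t) (y + t) + pderivY f (x + l * t) (y + t) := by
    rw [pderivX_eq f hf, pderivY_eq f hf]
    have : ((l : ℝ), (1:ℝ)) = l • ((1:ℝ), (0:ℝ)) + ((0:ℝ), (1:ℝ)) := by
      simp [Prod.ext_iff]
    rw [this, map_add, map_smul]
    simp
    rfl
  rw [h4] at h3
  exact h3

/-- The "lattice" `ℤ + lℤ` as an additive subgroup of `ℝ`. -/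
def lat (l : ℝ) : AddSubgroup ℝ where
  carrier := {x : ℝ | ∃ m n : ℤ, x = m + l * n}
  zero_mem' := ⟨0, 0, by simp⟩
  add_mem' := by
    rintro a b ⟨m, n, rfl⟩ ⟨m', n', rfl⟩
    exact ⟨m + m', n + n', by push_cast; ring⟩
  neg_mem' := by
    rintro a ⟨m, n, rfl⟩
    exact ⟨-m, -n, by push_cast; ring⟩

lemma lat_dense (l : ℝ) (hl : Irrational l) : Dense {x : ℝ | ∃ m n : ℤ, x = m + l * n} := by
  rcases (lat l).dense_or_cyclic with h | ⟨a, ha⟩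
  · exact h
  · exfalso
    have h1 : (1 : ℝ) ∈ lat l := ⟨1, 0, by simp⟩
    have h2 : l ∈ lat l := ⟨0, 1, by simp⟩
    rw [ha, ← AddSubgroup.zmultiples_eq_closure] at h1 h2
    obtain ⟨n, hn⟩ := h1
    obtain ⟨m, hm⟩ := h2
    simp only [zsmul_eq_mul] at hn hm
    have hn0 : (n : ℝ) ≠ 0 := by
      intro h; rw [h, zero_mul] at hn; exact one_ne_zero hn.symm
    have hml : (m : ℝ) = l * n := by
      calc (m:ℝ) = ↑m * (↑n * a) := by rw [hn]; ring
      _ = (↑m * a) * n := by ring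
      _ = l * n := by rw [hm]
    exact hl ⟨(m : ℚ) / (n : ℚ), by push_cast; field_simp; linarith [hml]⟩

/-- A closed set containing the shifted orbit of a characteristic line is everything. -/
lemma closed_fill (l : ℝ) (hl : Irrational l) (Z : Set (ℝ × ℝ)) (hZ : IsClosed Z)
    (x y : ℝ) (hmem : ∀ t : ℝ, ∀ m n : ℤ, (x + l * t + 2 * π * m, y + t + 2 * π * n) ∈ Z)
    (a b : ℝ) : (a, b) ∈ Z := by
  have key : ∀ s ∈ {x : ℝ | ∃ m n : ℤ, x = m + l * n}, ((x + l*(b-y)) + 2*π*s, b) ∈ Z := by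
    rintro s ⟨m, k, rfl⟩
    have := hmem (b - y + 2*π*k) m (-k)
    have e1 : x + l * (b - y + 2*π*k) + 2*π*m = x + l*(b-y) + 2*π*((m:ℝ) + l*k) := by ring
    have e2 : y + (b - y + 2*π*k) + 2*π*(-k:ℤ) = b := by push_cast; ring
    rw [e1, e2] at this
    exact this
  have hφ : Dense ((fun s : ℝ => (x + l*(b-y)) + 2*π*s) '' {x : ℝ | ∃ m n : ℤ, x = m + l * n}) := by
    have h2π : (2*π : ℝ) ≠ 0 := by positivity
    have hhom : Continuous (fun s : ℝ => (x + l*(b-y)) + 2*π*s) := by continuity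
    have hsurj : Function.Surjective (fun s : ℝ => (x + l*(b-y)) + 2*π*s) := by
      intro w; exact ⟨(w - (x + l*(b-y)))/(2*π), by field_simp; ring⟩
    exact hsurj.denseRange.dense_image hhom (lat_dense l hl)
  obtain ⟨u, hu, hlim⟩ := mem_closure_iff_seq_limit.1 (hφ a)
  have hten : Filter.Tendsto (fun i => (u i, b)) Filter.atTop (nhds (a, b)) :=
    hlim.prodMk_nhds tendsto_const_nhds
  exact hZ.mem_of_tendsto hten
    (Filter.Eventually.of_forall fun i => by
      obtain ⟨s, hs, hsi⟩ := hu i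
      exact hsi ▸ key s hs)

lemma ode_const (h C : ℝ → ℝ) (hC : Continuous C)
    (hd : ∀ t, HasDerivAt h (-(h t) * C t) t) (t : ℝ) :
    h t * Real.exp (∫ s in (0:ℝ)..t, C s) = h 0 := by
  set W : ℝ → ℝ := fun t => ∫ s in (0:ℝ)..t, C s with hW
  have hWd : ∀ t, HasDerivAt W (C t) t := fun t =>
    (hC.integral_hasStrictDerivAt 0 t).hasDerivAt
  set g : ℝ → ℝ := fun t => h t * Real.exp (W t) with hg
  have hgd : ∀ t, HasDerivAt g 0 t := by
    intro t
    have := (hd t).fun_mul ((hWd t).exp)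
    simpa using this.congr_deriv (by ring)
  have hconst : ∀ s, g s = g 0 :=
    fun s => is_const_of_deriv_eq_zero (fun r => (hgd r).differentiableAt)
      (fun r => (hgd r).deriv) s 0
  have := hconst t
  simp only [hg, hW] at this ⊢
  rw [this]
  simp

lemma deriv_zero_const (h : ℝ → ℝ) (hd : ∀ t, HasDerivAt h 0 t) (t : ℝ) : h t = h 0 :=
  is_const_of_deriv_eq_zero (fun s => (hd s).differentiableAt) (fun s => (hd s).deriv) t 0

lemma shiftX (f : ℝ → ℝ → ℝ) (hfp : Biperiodic f) (m : ℤ) (x y : ℝ) :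
    f (x + 2*π*m) y = f x y := by
  have hp : Function.Periodic (fun t => f t y) (2*π) := fun t => (hfp t y).1
  have := (hp.int_mul m) x
  simpa [show x + 2*π*m = x + m*(2*π) by ring] using this

lemma shiftY (f : ℝ → ℝ → ℝ) (hfp : Biperiodic f) (n : ℤ) (x y : ℝ) :
    f x (y + 2*π*n) = f x y := by
  have hp : Function.Periodic (fun t => f x t) (2*π) := fun t => (hfp x t).2
  have := (hp.int_mul n) y
  simpa [show y + 2*π*n = y + n*(2*π) by ring] using this

/-- For irrational `λ` and smooth 2π-biperiodic `c`, any smooth 2π-biperiodic solution `f`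
of `λ·∂f/∂x + ∂f/∂y + f·c = 0` is either identically zero or nowhere zero. If `f` is
nowhere zero then `c = λ·∂u/∂x + ∂u/∂y` for some smooth 2π-biperiodic `u`; conversely if
`c = λ·∂u/∂x + ∂u/∂y` for such a `u` then `f = C·e^{−u}` for some constant `C`. -/
theorem solution_dichotomy_and_form (l : ℝ) (hl : Irrational l)
    (c : ℝ → ℝ → ℝ) (hc : Smooth2 c) (hcp : Biperiodic c)
    (f : ℝ → ℝ → ℝ) (hf : Smooth2 f) (hfp : Biperiodic f)
    (heq : ∀ x y, l * pderivX f x y + pderivY f x y + f x y * c x y = 0) :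
    ((∀ x y, f x y = 0) ∨ (∀ x y, f x y ≠ 0)) ∧
    ((∀ x y, f x y ≠ 0) →
      ∃ u : ℝ → ℝ → ℝ, Smooth2 u ∧ Biperiodic u ∧
        ∀ x y, c x y = l * pderivX u x y + pderivY u x y) ∧
    (∀ u : ℝ → ℝ → ℝ, Smooth2 u → Biperiodic u →
      (∀ x y, c x y = l * pderivX u x y + pderivY u x y) →
      ∃ C : ℝ, ∀ x y, f x y = C * Real.exp (-(u x y))) := by
  have hfc : Continuous (fun p : ℝ × ℝ => f p.1 p.2) := hf.continuous
  have hcc : Continuous (fun p : ℝ × ℝ => c p.1 p.2) := hc.continuous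
  -- transport along characteristics: f at (x+lt, y+t) vanishes iff at (x,y)
  have char_zero : ∀ x y : ℝ, f x y = 0 → ∀ t : ℝ, f (x + l*t) (y + t) = 0 := by
    intro x y h0 t
    set h : ℝ → ℝ := fun s => f (x + l*s) (y + s) with hh
    set C : ℝ → ℝ := fun s => c (x + l*s) (y + s) with hC
    have hCc : Continuous C := by
      have : C = (fun p : ℝ × ℝ => c p.1 p.2) ∘ (fun s => (x + l*s, y + s)) := rfl
      rw [this]
      exact hcc.comp ((continuous_const.add (continuous_const.mul continuous_id)).prodMk
        (continuous_const.add continuous_id))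
    have hd : ∀ s, HasDerivAt h (-(h s) * C s) s := by
      intro s
      have := char_deriv f hf l x y s
      apply this.congr_deriv
      have := heq (x + l*s) (y + s)
      simp only [hh, hC]
      linarith
    have := ode_const h C hCc hd t
    have h00 : h 0 = 0 := by simp [hh, h0]
    rw [h00] at this
    have hexp : Real.exp (∫ s in (0:ℝ)..t, C s) ≠ 0 := Real.exp_ne_zero _
    have := mul_eq_zero.1 this
    tauto
  -- dichotomy
  have dich : (∀ x y, f x y = 0) ∨ (∀ x y, f x y ≠ 0) := by
    by_cases hz : ∃ x y, f x y = 0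
    · left
      obtain ⟨x0, y0, h0⟩ := hz
      set Z : Set (ℝ × ℝ) := {p | f p.1 p.2 = 0} with hZdef
      have hZ : IsClosed Z := isClosed_eq hfc continuous_const
      have hmem : ∀ t : ℝ, ∀ m n : ℤ, (x0 + l * t + 2 * π * m, y0 + t + 2 * π * n) ∈ Z := by
        intro t m n
        show f (x0 + l*t + 2*π*m) (y0 + t + 2*π*n) = 0
        rw [shiftX f hfp, shiftY f hfp]
        exact char_zero x0 y0 h0 t
      intro x y
      exact closed_fill l hl Z hZ x0 y0 hmem x y
    · right
      push_neg at hz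
      exact hz
  refine ⟨dich, ?_, ?_⟩
  · -- existence of u when f is nowhere zero
    intro hne
    refine ⟨fun x y => -(Real.log ((f x y)^2)) / 2, ?_, ?_, ?_⟩
    · -- smooth
      have h1 : ContDiff ℝ (⊤ : ℕ∞) fun p : ℝ × ℝ => (f p.1 p.2)^2 := hf.pow 2
      have h2 := (h1.log (fun p => pow_ne_zero 2 (hne p.1 p.2)))
      exact (h2.neg).div_const 2
    · intro x y
      refine ⟨?_, ?_⟩ <;> simp only [(hfp x y).1, (hfp x y).2]
    · intro x y
      have hfx := sectX_hasDerivAt' f hf x y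
      have hfy := sectY_hasDerivAt' f hf x y
      have hne0 : f x y ≠ 0 := hne x y
      have hsq : (f x y)^2 ≠ 0 := pow_ne_zero 2 hne0
      have hux : HasDerivAt (fun t => -(Real.log ((f t y)^2)) / 2)
          (-(pderivX f x y / f x y)) x := by
        have h1 : HasDerivAt (fun t => (f t y)^2) (2 * f x y * pderivX f x y) x := by
          simpa [mul_comm, mul_assoc] using hfx.fun_pow 2
        have h2 := (h1.log hsq).neg.div_const 2
        apply h2.congr_deriv
        field_simp
      have huy : HasDerivAt (fun t => -(Real.log ((f x t)^2)) / 2)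
          (-(pderivY f x y / f x y)) y := by
        have h1 : HasDerivAt (fun t => (f x t)^2) (2 * f x y * pderivY f x y) y := by
          simpa [mul_comm, mul_assoc] using hfy.fun_pow 2
        have h2 := (h1.log hsq).neg.div_const 2
        apply h2.congr_deriv
        field_simp
      have h3 : l * pderivX f x y + pderivY f x y = -(f x y * c x y) := by
        linarith [heq x y]
      simp only [pderivX, pderivY, hux.deriv, huy.deriv]
      have hD1 : deriv (fun t => f t y) x = pderivX f x y := rfl
      have hD2 : deriv (fun t => f x t) y = pderivY f x y := rfl
      rw [hD1, hD2]
      rw [show l * (-(pderivX f x y / f x y)) + -(pderivY f x y / f x y)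
          = -((l * pderivX f x y + pderivY f x y) / f x y) by ring, h3]
      field_simp
  · -- form of solutions given u
    intro u hu hup hcu
    refine ⟨f 0 0 * Real.exp (u 0 0), ?_⟩
    set Φ : ℝ × ℝ → ℝ := fun p => f p.1 p.2 * Real.exp (u p.1 p.2) with hΦ
    have hΦc : Continuous Φ := hfc.mul (hu.continuous.rexp)
    have char_const : ∀ t : ℝ, Φ (l*t, t) = Φ (0, 0) := by
      intro t
      set h : ℝ → ℝ := fun s => f (l*s) (s) * Real.exp (u (l*s) (s)) with hh
      have hd : ∀ s, HasDerivAt h 0 s := by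
        intro s
        have hF : HasDerivAt (fun r => f (l*r) (r))
            (l * pderivX f (l*s) (s) + pderivY f (l*s) (s)) s := by
          have := char_deriv f hf l 0 0 s
          simpa using this
        have hU : HasDerivAt (fun r => u (l*r) (r))
            (l * pderivX u (l*s) (s) + pderivY u (l*s) (s)) s := by
          have := char_deriv u hu l 0 0 s
          simpa using this
        have := hF.mul (hU.exp)
        apply this.congr_deriv
        have e1 := heq (l*s) s
        have e2 := hcu (l*s) s
        linear_combination Real.exp (u (l*s) s) * e1 - f (l*s) s * Real.exp (u (l*s) s) * e2
      have := deriv_zero_const h hd t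
      simpa [hh, hΦ] using this
    have main : ∀ x y : ℝ, Φ (x, y) = Φ (0, 0) := by
      set Z : Set (ℝ × ℝ) := {p | Φ p = Φ (0,0)} with hZdef
      have hZ : IsClosed Z := isClosed_eq hΦc continuous_const
      have hmem : ∀ t : ℝ, ∀ m n : ℤ, ((0:ℝ) + l * t + 2 * π * m, (0:ℝ) + t + 2 * π * n) ∈ Z := by
        intro t m n
        show Φ (0 + l*t + 2*π*m, 0 + t + 2*π*n) = Φ (0,0)
        have : Φ (0 + l*t + 2*π*m, 0 + t + 2*π*n) = Φ (l*t, t) := by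
          simp only [hΦ, zero_add]
          rw [shiftX f hfp, shiftY f hfp, shiftX u hup, shiftY u hup]
        rw [this]
        exact char_const t
      intro x y
      exact closed_fill l hl Z hZ 0 0 hmem x y
    intro x y
    have := main x y
    simp only [hΦ] at this
    have hexp : Real.exp (u x y) ≠ 0 := Real.exp_ne_zero _
    rw [Real.exp_neg]
    field_simp
    linarith [this]
end

section
/- Let λ be an irrational real number, and let c, a : ℝ² → ℝ be smooth 2π-biperiodic functions with ∫₀^{2π}∫₀^{2π} c(x,y) dx dy ≠ 0. Then every smooth 2π-biperiodic function f : ℝ² → ℝ satisfying λ·∂f/∂x(x,y) + ∂f/∂y(x,y) + f(x,y)·(c(x,y) − ∂a/∂x(x,y)) = 0 for all (x,y) ∈ ℝ² is identically zero. -/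
open Real

open MeasureTheory intervalIntegral

namespace Aux2DProof

lemma hasDerivAt_sliceX (u : ℝ → ℝ → ℝ) (hu : Smooth2 u) (x y : ℝ) :
    HasDerivAt (fun t => u t y)
      ((fderiv ℝ (fun p : ℝ × ℝ => u p.1 p.2) (x, y)) (1, 0)) x := by
  have h := ((hu.differentiable (by simp)) (x, y)).hasFDerivAt
  have hg : HasDerivAt (fun t : ℝ => ((t, y) : ℝ × ℝ)) ((1 : ℝ), (0 : ℝ)) x := by
    simpa using ((hasDerivAt_id x).prodMk (hasDerivAt_const x y))
  exact h.comp_hasDerivAt x hg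

lemma hasDerivAt_sliceY (u : ℝ → ℝ → ℝ) (hu : Smooth2 u) (x y : ℝ) :
    HasDerivAt (fun t => u x t)
      ((fderiv ℝ (fun p : ℝ × ℝ => u p.1 p.2) (x, y)) (0, 1)) y := by
  have h := ((hu.differentiable (by simp)) (x, y)).hasFDerivAt
  have hg : HasDerivAt (fun t : ℝ => ((x, t) : ℝ × ℝ)) ((0 : ℝ), (1 : ℝ)) y := by
    simpa using ((hasDerivAt_const y x).prodMk (hasDerivAt_id y))
  exact h.comp_hasDerivAt y hg

lemma pderivX_eq (u : ℝ → ℝ → ℝ) (hu : Smooth2 u) (x y : ℝ) :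
    pderivX u x y = (fderiv ℝ (fun p : ℝ × ℝ => u p.1 p.2) (x, y)) (1, 0) :=
  (hasDerivAt_sliceX u hu x y).deriv

lemma pderivY_eq (u : ℝ → ℝ → ℝ) (hu : Smooth2 u) (x y : ℝ) :
    pderivY u x y = (fderiv ℝ (fun p : ℝ × ℝ => u p.1 p.2) (x, y)) (0, 1) :=
  (hasDerivAt_sliceY u hu x y).deriv

lemma hasDerivAt_pX (u : ℝ → ℝ → ℝ) (hu : Smooth2 u) (x y : ℝ) :
    HasDerivAt (fun t => u t y) (pderivX u x y) x := by
  rw [pderivX_eq u hu]; exact hasDerivAt_sliceX u hu x y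

lemma hasDerivAt_pY (u : ℝ → ℝ → ℝ) (hu : Smooth2 u) (x y : ℝ) :
    HasDerivAt (fun t => u x t) (pderivY u x y) y := by
  rw [pderivY_eq u hu]; exact hasDerivAt_sliceY u hu x y

lemma continuous_pX (u : ℝ → ℝ → ℝ) (hu : Smooth2 u) :
    Continuous fun p : ℝ × ℝ => pderivX u p.1 p.2 := by
  have h : Continuous fun p : ℝ × ℝ =>
      (fderiv ℝ (fun q : ℝ × ℝ => u q.1 q.2) p) ((1 : ℝ), (0 : ℝ)) :=
    (hu.continuous_fderiv (by simp)).clm_apply continuous_const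
  have : (fun p : ℝ × ℝ => pderivX u p.1 p.2)
      = fun p : ℝ × ℝ => (fderiv ℝ (fun q : ℝ × ℝ => u q.1 q.2) p) ((1 : ℝ), (0 : ℝ)) := by
    funext p; exact pderivX_eq u hu p.1 p.2
  rw [this]; exact h

lemma continuous_pY (u : ℝ → ℝ → ℝ) (hu : Smooth2 u) :
    Continuous fun p : ℝ × ℝ => pderivY u p.1 p.2 := by
  have h : Continuous fun p : ℝ × ℝ =>
      (fderiv ℝ (fun q : ℝ × ℝ => u q.1 q.2) p) ((0 : ℝ), (1 : ℝ)) :=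
    (hu.continuous_fderiv (by simp)).clm_apply continuous_const
  have : (fun p : ℝ × ℝ => pderivY u p.1 p.2)
      = fun p : ℝ × ℝ => (fderiv ℝ (fun q : ℝ × ℝ => u q.1 q.2) p) ((0 : ℝ), (1 : ℝ)) := by
    funext p; exact pderivY_eq u hu p.1 p.2
  rw [this]; exact h

/-- Derivative along the characteristic line. -/
lemma hasDerivAt_char (u : ℝ → ℝ → ℝ) (hu : Smooth2 u) (l x0 y0 t : ℝ) :
    HasDerivAt (fun s => u (x0 + l * s) (y0 + s))
      (l * pderivX u (x0 + l * t) (y0 + t) + pderivY u (x0 + l * t) (y0 + t)) t := by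
  have h := ((hu.differentiable (by simp)) ((x0 + l * t, y0 + t) : ℝ × ℝ)).hasFDerivAt
  have hg : HasDerivAt (fun s : ℝ => ((x0 + l * s, y0 + s) : ℝ × ℝ)) ((l : ℝ), (1 : ℝ)) t := by
    have h1 : HasDerivAt (fun s : ℝ => x0 + l * s) l t := by
      simpa using ((hasDerivAt_id t).const_mul l).const_add x0
    have h2 : HasDerivAt (fun s : ℝ => y0 + s) 1 t := by
      simpa using (hasDerivAt_id t).const_add y0
    exact h1.prodMk h2
  have := h.comp_hasDerivAt t hg
  have hval : (fderiv ℝ (fun p : ℝ × ℝ => u p.1 p.2) (x0 + l * t, y0 + t)) ((l : ℝ), (1 : ℝ))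
      = l * pderivX u (x0 + l * t) (y0 + t) + pderivY u (x0 + l * t) (y0 + t) := by
    rw [pderivX_eq u hu, pderivY_eq u hu]
    have : ((l : ℝ), (1 : ℝ)) = l • ((1 : ℝ), (0 : ℝ)) + ((0 : ℝ), (1 : ℝ)) := by
      simp [Prod.ext_iff]
    rw [this, map_add, ContinuousLinearMap.map_smul]
    simp [smul_eq_mul]
  rw [hval] at this
  exact this

/-- A solution of `g' = -k g` with `g 0 = 0` vanishes identically. -/
lemma ode_zero (g k : ℝ → ℝ) (hk : Continuous k)
    (hg : ∀ t, HasDerivAt g (-(k t) * g t) t) (h0 : g 0 = 0) : ∀ t, g t = 0 := by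
  set K : ℝ → ℝ := fun t => ∫ s in (0 : ℝ)..t, k s with hKdef
  have hK : ∀ t, HasDerivAt K (k t) t := fun t =>
    (hk.integral_hasStrictDerivAt 0 t).hasDerivAt
  set E : ℝ → ℝ := fun t => g t * Real.exp (K t) with hEdef
  have hE : ∀ t, HasDerivAt E 0 t := by
    intro t
    have h1 : HasDerivAt (fun t => Real.exp (K t)) (Real.exp (K t) * k t) t :=
      (hK t).exp
    have := (hg t).mul h1
    exact this.congr_deriv (by ring)
  have hconst : ∀ t, E t = E 0 := by
    intro t
    have hdiff : Differentiable ℝ E := fun x => (hE x).differentiableAt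
    have hderiv : ∀ x, deriv E x = 0 := fun x => (hE x).deriv
    have := is_const_of_deriv_eq_zero hdiff hderiv t 0
    exact this
  intro t
  have hEt : E t = 0 := by
    rw [hconst t, hEdef]
    simp [h0]
  have : g t * Real.exp (K t) = 0 := hEt
  have hexp : Real.exp (K t) ≠ 0 := Real.exp_ne_zero _
  exact (mul_eq_zero.mp this).resolve_right hexp

/-- The subgroup generated by `2π` and `2πl` is dense when `l` is irrational. -/
lemma dense_subgroup (l : ℝ) (hl : Irrational l) :
    Dense ((AddSubgroup.closure ({2 * π, 2 * π * l} : Set ℝ) : AddSubgroup ℝ) : Set ℝ) := by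
  rcases AddSubgroup.dense_or_cyclic (AddSubgroup.closure ({2 * π, 2 * π * l} : Set ℝ)) with h | ⟨a, ha⟩
  · exact h
  · exfalso
    have h1 : (2 * π : ℝ) ∈ AddSubgroup.closure ({2 * π, 2 * π * l} : Set ℝ) :=
      AddSubgroup.subset_closure (by simp)
    have h2 : (2 * π * l : ℝ) ∈ AddSubgroup.closure ({2 * π, 2 * π * l} : Set ℝ) :=
      AddSubgroup.subset_closure (by simp)
    rw [ha, AddSubgroup.mem_closure_singleton] at h1 h2
    obtain ⟨m, hm⟩ := h1
    obtain ⟨n, hn⟩ := h2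
    have hm0 : (m : ℝ) ≠ 0 := by
      intro h
      have : m = 0 := by exact_mod_cast h
      subst this
      simp at hm
    have ha0 : a ≠ 0 := by
      intro h
      subst h
      simp at hm
    have hlval : l = (n : ℝ) / (m : ℝ) := by
      have hmr : (m : ℝ) * a = 2 * π := by rw [← hm]; simp [zsmul_eq_mul]
      have hnr : (n : ℝ) * a = 2 * π * l := by rw [← hn]; simp [zsmul_eq_mul]
      have key : (n : ℝ) * a = ((m : ℝ) * l) * a := by
        rw [hnr, ← hmr]; ring
      have hnm : (n : ℝ) = (m : ℝ) * l := mul_right_cancel₀ ha0 key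
      field_simp
      linarith [hnm]
    exact hl ⟨(n : ℚ) / (m : ℚ), by push_cast [hlval]; ring⟩

end Aux2DProof

open Aux2DProof

/-- For irrational `λ` and smooth 2π-biperiodic `c, a` with
`∫₀^{2π}∫₀^{2π} c(x,y) dx dy ≠ 0`, every smooth 2π-biperiodic solution `f` of
`λ·∂f/∂x + ∂f/∂y + f·(c − ∂a/∂x) = 0` is identically zero. -/
theorem nonzero_integral_only_zero_solution (l : ℝ) (hl : Irrational l)
    (c a : ℝ → ℝ → ℝ) (hc : Smooth2 c) (hcp : Biperiodic c)
    (ha : Smooth2 a) (hap : Biperiodic a)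
    (hint : (∫ y in (0:ℝ)..(2 * π), ∫ x in (0:ℝ)..(2 * π), c x y) ≠ 0)
    (f : ℝ → ℝ → ℝ) (hf : Smooth2 f) (hfp : Biperiodic f)
    (heq : ∀ x y, l * pderivX f x y + pderivY f x y + f x y * (c x y - pderivX a x y) = 0) :
    ∀ x y, f x y = 0 := by
  -- continuity facts
  have hfc : Continuous fun p : ℝ × ℝ => f p.1 p.2 := hf.continuous
  have hcc : Continuous fun p : ℝ × ℝ => c p.1 p.2 := hc.continuous
  have hax : Continuous fun p : ℝ × ℝ => pderivX a p.1 p.2 := continuous_pX a ha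
  have hfx : Continuous fun p : ℝ × ℝ => pderivX f p.1 p.2 := continuous_pX f hf
  have hfy : Continuous fun p : ℝ × ℝ => pderivY f p.1 p.2 := continuous_pY f hf
  -- the characteristic ODE: if f vanishes at (x0, y0) it vanishes along the characteristic
  have char : ∀ x0 y0 : ℝ, f x0 y0 = 0 → ∀ t : ℝ, f (x0 + l * t) (y0 + t) = 0 := by
    intro x0 y0 h0 t
    set g : ℝ → ℝ := fun s => f (x0 + l * s) (y0 + s) with hgdef
    set k : ℝ → ℝ := fun s =>
      c (x0 + l * s) (y0 + s) - pderivX a (x0 + l * s) (y0 + s) with hkdef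
    have hkc : Continuous k := by
      apply Continuous.sub
      · exact hcc.comp
          ((continuous_const.add (continuous_const.mul continuous_id)).prodMk
            (continuous_const.add continuous_id))
      · exact hax.comp
          ((continuous_const.add (continuous_const.mul continuous_id)).prodMk
            (continuous_const.add continuous_id))
    have hgd : ∀ s, HasDerivAt g (-(k s) * g s) s := by
      intro s
      have h := hasDerivAt_char f hf l x0 y0 s
      have hval : l * pderivX f (x0 + l * s) (y0 + s) + pderivY f (x0 + l * s) (y0 + s)
          = -(k s) * g s := by
        have := heq (x0 + l * s) (y0 + s)
        simp only [hkdef, hgdef]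
        linarith
      rw [hval] at h
      exact h
    have := ode_zero g k hkc hgd (by simpa [hgdef] using h0)
    exact this t
  by_cases hz : ∃ p : ℝ × ℝ, f p.1 p.2 = 0
  · -- Case 1: f has a zero; propagate along dense orbit
    obtain ⟨⟨x0, y0⟩, h0⟩ := hz
    simp only at h0
    -- f vanishes on the whole characteristic
    have hchar := char x0 y0 h0
    -- periodicity as Function.Periodic
    have hperX : ∀ y, Function.Periodic (fun x => f x y) (2 * π) := fun y x => (hfp x y).1
    have hperY : ∀ x, Function.Periodic (fun y => f x y) (2 * π) := fun x y => (hfp x y).2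
    -- f vanishes at (b + n·2πl, 0) for all n : ℤ, with b = x0 - l*y0
    set b : ℝ := x0 - l * y0 with hbdef
    have hzn : ∀ n : ℤ, f (b + n • (2 * π * l)) 0 = 0 := by
      intro n
      have ht := hchar (2 * π * n - y0)
      have harg : x0 + l * (2 * π * n - y0) = b + n • (2 * π * l) := by
        simp [hbdef, zsmul_eq_mul]; ring
      have hy : y0 + (2 * π * n - y0) = 0 + n • (2 * π) := by
        simp [zsmul_eq_mul]; ring
      rw [harg, hy] at ht
      have hper : f (b + n • (2 * π * l)) (0 + n • (2 * π)) = f (b + n • (2 * π * l)) 0 :=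
        (hperY (b + n • (2 * π * l))).zsmul n 0
      rw [← hper]; exact ht
    -- f vanishes at (b + s, 0) for all s in the dense subgroup
    have hzs : ∀ s ∈ (AddSubgroup.closure ({2 * π, 2 * π * l} : Set ℝ)), f (b + s) 0 = 0 := by
      intro s hs
      rw [AddSubgroup.mem_closure_pair] at hs
      obtain ⟨m, n, hmn⟩ := hs
      have h1 : f (b + n • (2 * π * l) + m • (2 * π)) 0 = f (b + n • (2 * π * l)) 0 :=
        (hperX 0).zsmul m (b + n • (2 * π * l))
      have harg : b + s = b + n • (2 * π * l) + m • (2 * π) := by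
        rw [← hmn]; push_cast [zsmul_eq_mul]; ring
      rw [harg, h1]
      exact hzn n
    -- by density and continuity, f(·, 0) ≡ 0
    have hzero0 : ∀ x : ℝ, f x 0 = 0 := by
      intro x
      have hdense : Dense ((fun s => b + s) ''
          ((AddSubgroup.closure ({2 * π, 2 * π * l} : Set ℝ) : AddSubgroup ℝ) : Set ℝ)) := by
        have h := dense_subgroup l hl
        rw [dense_iff_closure_eq] at h ⊢
        have himg : (fun s : ℝ => b + s) ''
            ((AddSubgroup.closure ({2 * π, 2 * π * l} : Set ℝ) : AddSubgroup ℝ) : Set ℝ)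
            = (Homeomorph.addLeft b) ''
              ((AddSubgroup.closure ({2 * π, 2 * π * l} : Set ℝ) : AddSubgroup ℝ) : Set ℝ) := rfl
        rw [himg, ← Homeomorph.image_closure, h, Set.image_univ]
        exact (Homeomorph.addLeft b).surjective.range_eq
      have hcont : Continuous fun x : ℝ => f x 0 := hfc.comp (continuous_id.prodMk continuous_const)
      have heqon : Set.EqOn (fun x : ℝ => f x 0) (fun _ => (0 : ℝ))
          ((fun s => b + s) ''
            ((AddSubgroup.closure ({2 * π, 2 * π * l} : Set ℝ) : AddSubgroup ℝ) : Set ℝ)) := by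
        rintro x ⟨s, hs, rfl⟩
        exact hzs s hs
      have := Continuous.ext_on hdense hcont continuous_const heqon
      exact congrFun this x
    -- propagate from y = 0 to arbitrary y along characteristics
    intro x y
    have := char (x - l * y) 0 (hzero0 _) y
    simpa [sub_add_cancel] using this
  · -- Case 2: f never vanishes; contradiction with the integral hypothesis
    exfalso
    push_neg at hz
    have hne : ∀ x y : ℝ, f x y ≠ 0 := fun x y => hz (x, y)
    -- slice continuity helpers
    have hsliceX : ∀ (u : ℝ → ℝ → ℝ), Continuous (fun p : ℝ × ℝ => u p.1 p.2) →
        ∀ y : ℝ, Continuous fun x => u x y := by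
      intro u hu y
      exact hu.comp (continuous_id.prodMk continuous_const)
    have hsliceY : ∀ (u : ℝ → ℝ → ℝ), Continuous (fun p : ℝ × ℝ => u p.1 p.2) →
        ∀ x : ℝ, Continuous fun y => u x y := by
      intro u hu x
      exact hu.comp (continuous_const.prodMk continuous_id)
    -- Step A : ∫ pderivX a dx = 0
    have stepA : ∀ y : ℝ, (∫ x in (0:ℝ)..(2 * π), pderivX a x y) = 0 := by
      intro y
      have hderiv : ∀ x ∈ Set.uIcc (0 : ℝ) (2 * π), HasDerivAt (fun t => a t y)
          (pderivX a x y) x := fun x _ => hasDerivAt_pX a ha x y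
      have hint : IntervalIntegrable (fun x => pderivX a x y) volume 0 (2 * π) :=
        (hsliceX _ hax y).intervalIntegrable _ _
      rw [integral_eq_sub_of_hasDerivAt hderiv hint]
      have : a (2 * π) y = a 0 y := by simpa using (hap 0 y).1
      rw [this]; ring
    -- Step B : ∫ pderivX f / f dx = 0
    have stepB : ∀ y : ℝ, (∫ x in (0:ℝ)..(2 * π), pderivX f x y / f x y) = 0 := by
      intro y
      have hderiv : ∀ x ∈ Set.uIcc (0 : ℝ) (2 * π),
          HasDerivAt (fun t => Real.log (f t y)) (pderivX f x y / f x y) x :=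
        fun x _ => (hasDerivAt_pX f hf x y).log (hne x y)
      have hcd : Continuous fun x => pderivX f x y / f x y :=
        (hsliceX _ hfx y).div (hsliceX _ hfc y) (fun x => hne x y)
      rw [integral_eq_sub_of_hasDerivAt hderiv (hcd.intervalIntegrable _ _)]
      have : f (2 * π) y = f 0 y := by simpa using (hfp 0 y).1
      rw [this]; ring
    -- Step C : ∫ pderivY f / f dy = 0
    have stepC : ∀ x : ℝ, (∫ y in (0:ℝ)..(2 * π), pderivY f x y / f x y) = 0 := by
      intro x
      have hderiv : ∀ y ∈ Set.uIcc (0 : ℝ) (2 * π),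
          HasDerivAt (fun t => Real.log (f x t)) (pderivY f x y / f x y) y :=
        fun y _ => (hasDerivAt_pY f hf x y).log (hne x y)
      have hcd : Continuous fun y => pderivY f x y / f x y :=
        (hsliceY _ hfy x).div (hsliceY _ hfc x) (fun y => hne x y)
      rw [integral_eq_sub_of_hasDerivAt hderiv (hcd.intervalIntegrable _ _)]
      have : f x (2 * π) = f x 0 := by simpa using (hfp x 0).2
      rw [this]; ring
    -- Step D : pointwise identity for c
    have stepD : ∀ x y : ℝ, c x y = pderivX a x y - l * (pderivX f x y / f x y)
        - pderivY f x y / f x y := by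
      intro x y
      have h := heq x y
      have hf0 := hne x y
      field_simp
      nlinarith [h]
    -- Step E : the inner integral of c
    have stepE : ∀ y : ℝ, (∫ x in (0:ℝ)..(2 * π), c x y)
        = -∫ x in (0:ℝ)..(2 * π), pderivY f x y / f x y := by
      intro y
      have h1 : (∫ x in (0:ℝ)..(2 * π), c x y)
          = ∫ x in (0:ℝ)..(2 * π),
              (pderivX a x y - l * (pderivX f x y / f x y) - pderivY f x y / f x y) := by
        apply intervalIntegral.integral_congr
        intro x _
        exact stepD x y
      have ia : IntervalIntegrable (fun x => pderivX a x y) volume 0 (2 * π) :=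
        (hsliceX _ hax y).intervalIntegrable _ _
      have ib : IntervalIntegrable (fun x => l * (pderivX f x y / f x y)) volume 0 (2 * π) :=
        (continuous_const.mul ((hsliceX _ hfx y).div (hsliceX _ hfc y)
          (fun x => hne x y))).intervalIntegrable _ _
      have ic : IntervalIntegrable (fun x => pderivY f x y / f x y) volume 0 (2 * π) :=
        ((hsliceX _ hfy y).div (hsliceX _ hfc y) (fun x => hne x y)).intervalIntegrable _ _
      rw [h1, intervalIntegral.integral_sub (ia.sub ib) ic, intervalIntegral.integral_sub ia ib,
        intervalIntegral.integral_const_mul, stepA y, stepB y]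
      ring
    -- Fubini for the remaining term
    have fubini : (∫ y in (0:ℝ)..(2 * π), ∫ x in (0:ℝ)..(2 * π), pderivY f x y / f x y)
        = ∫ x in (0:ℝ)..(2 * π), ∫ y in (0:ℝ)..(2 * π), pderivY f x y / f x y := by
      set G : ℝ × ℝ → ℝ := fun p => pderivY f p.1 p.2 / f p.1 p.2 with hGdef
      have hGc : Continuous G := hfy.div hfc (fun p => hne p.1 p.2)
      have h2π : (0 : ℝ) ≤ 2 * π := by positivity
      rw [intervalIntegral.integral_of_le h2π, intervalIntegral.integral_of_le h2π]
      simp_rw [intervalIntegral.integral_of_le h2π]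
      have hInt : Integrable (Function.uncurry fun y x => G (x, y))
          ((volume.restrict (Set.Ioc (0:ℝ) (2 * π))).prod
            (volume.restrict (Set.Ioc (0:ℝ) (2 * π)))) := by
        rw [Measure.prod_restrict]
        have hcomp : IsCompact (Set.Icc (0:ℝ) (2 * π) ×ˢ Set.Icc (0:ℝ) (2 * π)) :=
          isCompact_Icc.prod isCompact_Icc
        have hcont : Continuous (Function.uncurry fun y x : ℝ => G (x, y)) := by
          apply hGc.comp
          exact (continuous_snd.prodMk continuous_fst)
        have hio : IntegrableOn (Function.uncurry fun y x : ℝ => G (x, y))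
            (Set.Icc (0:ℝ) (2 * π) ×ˢ Set.Icc (0:ℝ) (2 * π)) (volume.prod volume) :=
          hcont.continuousOn.integrableOn_compact hcomp
        exact hio.mono_set (Set.prod_mono Set.Ioc_subset_Icc_self Set.Ioc_subset_Icc_self)
      have := MeasureTheory.integral_integral_swap hInt
      simpa using this
    -- conclude
    apply hint
    have h1 : (∫ y in (0:ℝ)..(2 * π), ∫ x in (0:ℝ)..(2 * π), c x y)
        = -∫ y in (0:ℝ)..(2 * π), ∫ x in (0:ℝ)..(2 * π), pderivY f x y / f x y := by
      rw [← intervalIntegral.integral_neg]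
      apply intervalIntegral.integral_congr
      intro y _
      simpa using stepE y
    rw [h1, fubini]
    have : (∫ x in (0:ℝ)..(2 * π), ∫ y in (0:ℝ)..(2 * π), pderivY f x y / f x y)
        = ∫ x in (0:ℝ)..(2 * π), (0:ℝ) := by
      apply intervalIntegral.integral_congr
      intro x _
      exact stepC x
    rw [this]
    simp
end

section
/- Let a : ℝ² → ℝ be a smooth 2π-biperiodic function and f : ℝ → ℝ a smooth 2π-periodic function. Then the following are equivalent: (i) there exist smooth maps A, F : ℝ × ℝ² → ℝ, 2π-biperiodic in the last two variables for each fixed first variable, with A(0,x,y) = 0, F(0,x,y) = 0, ∂A/∂s(0,x,y) = a(x,y), ∂F/∂s(0,x,y) = f(x), and ∂F/∂y(s,x,y) = F(s,x,y)·∂A/∂x(s,x,y) for all (s,x,y) ∈ ℝ × ℝ²; (ii) f(x)·(d/dx)(∫₀^{2π} a(x,y) dy) = 0 for all x ∈ ℝ. -/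
open Real

open MeasureTheory intervalIntegral
open scoped ContDiff
set_option linter.unusedSectionVars false

set_option synthInstance.maxHeartbeats 1000000

section Param

variable {H : Type} [NormedAddCommGroup H] [NormedSpace ℝ H] [ProperSpace H]
  {F : Type} [NormedAddCommGroup F] [NormedSpace ℝ F] [CompleteSpace F]

lemma hasFDerivAt_parametric_integral {K : H × ℝ → F} (hK : ContDiff ℝ (⊤ : ℕ∞) K)
    (a b : ℝ) (x₀ : H) :
    HasFDerivAt (fun x : H => ∫ t in a..b, K (x, t))
      (∫ t in a..b, (fderiv ℝ K (x₀, t)).comp (ContinuousLinearMap.inl ℝ H ℝ)) x₀ := by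
  set K' : H → ℝ → H →L[ℝ] F :=
    fun x t => (fderiv ℝ K (x, t)).comp (ContinuousLinearMap.inl ℝ H ℝ) with hK'
  have hKd : Differentiable ℝ K := hK.differentiable (by simp)
  have hfc : Continuous (fderiv ℝ K) := (hK.fderiv_right (m := (⊤:ℕ∞)) (by exact_mod_cast le_rfl)).continuous
  have hcont : ∀ x : H, Continuous fun t => K (x, t) := fun x =>
    hK.continuous.comp (continuous_const.prodMk continuous_id)
  have hK'c : Continuous fun p : H × ℝ => K' p.1 p.2 := by
    exact Continuous.clm_comp (hfc.comp continuous_id) continuous_const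
  obtain ⟨C, hC⟩ :=
    ((isCompact_closedBall x₀ 1).prod isCompact_uIcc).exists_bound_of_continuousOn
      hK'c.continuousOn
  refine hasFDerivAt_integral_of_dominated_of_fderiv_le (F := fun x t => K (x, t))
    (F' := K') (bound := fun _ => C) (Metric.ball_mem_nhds x₀ one_pos) ?_ ?_ ?_ ?_ ?_ ?_
  · exact Filter.Eventually.of_forall fun x => (hcont x).aestronglyMeasurable
  · exact (hcont x₀).intervalIntegrable a b
  · exact (hK'c.comp (continuous_const.prodMk continuous_id)).aestronglyMeasurable
  · refine Filter.Eventually.of_forall fun t ht x hx => ?_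
    exact hC (x, t) ⟨Metric.ball_subset_closedBall hx, Set.uIoc_subset_uIcc ht⟩
  · exact intervalIntegrable_const
  · refine Filter.Eventually.of_forall fun t ht x hx => ?_
    exact ((hKd (x, t)).hasFDerivAt).comp x (hasFDerivAt_prodMk_left x t)

end Param

section Param2
variable {H : Type} [NormedAddCommGroup H] [NormedSpace ℝ H] [ProperSpace H]

lemma contDiff_parametric_integral_aux (n : ℕ) :
    ∀ {F : Type} [NormedAddCommGroup F] [NormedSpace ℝ F] [CompleteSpace F]
      (K : H × ℝ → F), ContDiff ℝ (⊤ : ℕ∞) K → ∀ a b : ℝ,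
      ContDiff ℝ (n : ℕ∞) fun x : H => ∫ t in a..b, K (x, t) := by
  induction n with
  | zero =>
    intro F _ _ _ K hK a b
    have : Continuous fun x : H => ∫ t in a..b, K (x, t) :=
      continuous_iff_continuousAt.2 fun x =>
        (hasFDerivAt_parametric_integral hK a b x).continuousAt
    exact_mod_cast contDiff_zero.2 this
  | succ n ih =>
    intro F _ _ _ K hK a b
    have hK' : ContDiff ℝ (⊤ : ℕ∞)
        (fun q : H × ℝ => (fderiv ℝ K q).comp (ContinuousLinearMap.inl ℝ H ℝ)) :=
      ContDiff.clm_comp (hK.fderiv_right (m := (⊤:ℕ∞)) (by exact_mod_cast le_rfl)) contDiff_const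
    have : ContDiff ℝ ((n : ℕ∞) + 1 : WithTop ℕ∞) fun x : H => ∫ t in a..b, K (x, t) := by
      rw [contDiff_succ_iff_fderiv]
      refine ⟨fun x => (hasFDerivAt_parametric_integral hK a b x).differentiableAt, ?_, ?_⟩
      · intro h; exact absurd h (by simp)
      · have : fderiv ℝ (fun x : H => ∫ t in a..b, K (x, t)) =
            fun x : H => ∫ t in a..b, (fderiv ℝ K (x, t)).comp (ContinuousLinearMap.inl ℝ H ℝ) :=
          funext fun x => (hasFDerivAt_parametric_integral hK a b x).fderiv
        rw [this]
        exact ih _ hK' a b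
    exact_mod_cast this

lemma contDiff_parametric_integral {F : Type} [NormedAddCommGroup F] [NormedSpace ℝ F]
    [CompleteSpace F] {K : H × ℝ → F} (hK : ContDiff ℝ (⊤ : ℕ∞) K) (a b : ℝ) :
    ContDiff ℝ (⊤ : ℕ∞) fun x : H => ∫ t in a..b, K (x, t) := by
  rw [contDiff_infty]
  exact fun n => by exact_mod_cast contDiff_parametric_integral_aux n K hK a b

end Param2


namespace Smooth2

variable {u : ℝ → ℝ → ℝ}

lemma diff (hu : Smooth2 u) : Differentiable ℝ (fun p : ℝ × ℝ => u p.1 p.2) :=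
  hu.differentiable (by simp)

lemma hasDerivAt_fst (hu : Smooth2 u) (x y : ℝ) :
    HasDerivAt (fun t => u t y) (fderiv ℝ (fun p : ℝ × ℝ => u p.1 p.2) (x, y) (1, 0)) x := by
  have h1 : HasDerivAt (fun t : ℝ => (t, y)) ((1 : ℝ), (0 : ℝ)) x :=
    (hasDerivAt_id x).prodMk (hasDerivAt_const x y)
  exact (hu.diff (x, y)).hasFDerivAt.comp_hasDerivAt x h1

lemma hasDerivAt_snd (hu : Smooth2 u) (x y : ℝ) :
    HasDerivAt (fun t => u x t) (fderiv ℝ (fun p : ℝ × ℝ => u p.1 p.2) (x, y) (0, 1)) y := by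
  have h1 : HasDerivAt (fun t : ℝ => (x, t)) ((0 : ℝ), (1 : ℝ)) y :=
    (hasDerivAt_const y x).prodMk (hasDerivAt_id y)
  exact (hu.diff (x, y)).hasFDerivAt.comp_hasDerivAt y h1

lemma pderivX_eq (hu : Smooth2 u) (x y : ℝ) :
    pderivX u x y = fderiv ℝ (fun p : ℝ × ℝ => u p.1 p.2) (x, y) (1, 0) :=
  (hu.hasDerivAt_fst x y).deriv

lemma pderivY_eq (hu : Smooth2 u) (x y : ℝ) :
    pderivY u x y = fderiv ℝ (fun p : ℝ × ℝ => u p.1 p.2) (x, y) (0, 1) :=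
  (hu.hasDerivAt_snd x y).deriv

lemma hasDerivAt_pderivX (hu : Smooth2 u) (x y : ℝ) :
    HasDerivAt (fun t => u t y) (pderivX u x y) x := by
  rw [hu.pderivX_eq]; exact hu.hasDerivAt_fst x y

lemma hasDerivAt_pderivY (hu : Smooth2 u) (x y : ℝ) :
    HasDerivAt (fun t => u x t) (pderivY u x y) y := by
  rw [hu.pderivY_eq]; exact hu.hasDerivAt_snd x y

lemma fderiv_smooth (hu : Smooth2 u) :
    ContDiff ℝ (⊤ : ℕ∞) (fderiv ℝ (fun p : ℝ × ℝ => u p.1 p.2)) :=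
  hu.fderiv_right (m := (⊤ : ℕ∞)) (by exact_mod_cast le_rfl)

lemma pderivX_smooth (hu : Smooth2 u) : Smooth2 (pderivX u) := by
  have : (fun p : ℝ × ℝ => pderivX u p.1 p.2) =
      fun p : ℝ × ℝ => fderiv ℝ (fun p : ℝ × ℝ => u p.1 p.2) p (1, 0) := by
    funext p; exact hu.pderivX_eq p.1 p.2
  unfold Smooth2
  rw [this]
  exact hu.fderiv_smooth.clm_apply contDiff_const

lemma pderivY_smooth (hu : Smooth2 u) : Smooth2 (pderivY u) := by
  have : (fun p : ℝ × ℝ => pderivY u p.1 p.2) =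
      fun p : ℝ × ℝ => fderiv ℝ (fun p : ℝ × ℝ => u p.1 p.2) p (0, 1) := by
    funext p; exact hu.pderivY_eq p.1 p.2
  unfold Smooth2
  rw [this]
  exact hu.fderiv_smooth.clm_apply contDiff_const

lemma contX (hu : Smooth2 u) (y : ℝ) : Continuous fun t => u t y :=
  hu.continuous.comp (continuous_id.prodMk continuous_const)

lemma contY (hu : Smooth2 u) (x : ℝ) : Continuous fun t => u x t :=
  hu.continuous.comp (continuous_const.prodMk continuous_id)

/-- Clairaut / symmetry of second derivatives -/
lemma deriv_swap (hu : Smooth2 u) (s₀ x : ℝ) :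
    deriv (fun s => deriv (fun t => u s t) x) s₀ =
      deriv (fun t => deriv (fun s => u s t) s₀) x := by
  set G : ℝ × ℝ → ℝ := fun p => u p.1 p.2 with hG
  set D := fderiv ℝ G with hD
  set D2 := fderiv ℝ D (s₀, x) with hD2
  have hGd : ∀ p, HasFDerivAt G (D p) p := fun p => (hu.diff p).hasFDerivAt
  have hDd : HasFDerivAt D D2 (s₀, x) :=
    (hu.fderiv_smooth.differentiable (by simp) (s₀, x)).hasFDerivAt
  have hsymm : D2 (1, 0) (0, 1) = D2 (0, 1) (1, 0) :=
    second_derivative_symmetric hGd hDd _ _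
  have hL : deriv (fun s => deriv (fun t => u s t) x) s₀ = D2 (1, 0) (0, 1) := by
    have e1 : (fun s => deriv (fun t => u s t) x) = fun s => D (s, x) (0, 1) := by
      funext s; exact hu.pderivY_eq s x
    rw [e1]
    have hcurve : HasDerivAt (fun s : ℝ => (s, x)) ((1 : ℝ), (0 : ℝ)) s₀ :=
      (hasDerivAt_id s₀).prodMk (hasDerivAt_const s₀ x)
    have h2 : HasDerivAt (fun s : ℝ => D (s, x)) (D2 (1, 0)) s₀ :=
      hDd.comp_hasDerivAt s₀ hcurve
    have h3 : HasDerivAt (fun s : ℝ => D (s, x) (0, 1)) (D2 (1, 0) (0, 1)) s₀ := by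
      have := h2.clm_apply (hasDerivAt_const s₀ ((0 : ℝ), (1 : ℝ)))
      simpa using this
    exact h3.deriv
  have hR : deriv (fun t => deriv (fun s => u s t) s₀) x = D2 (0, 1) (1, 0) := by
    have e1 : (fun t => deriv (fun s => u s t) s₀) = fun t => D (s₀, t) (1, 0) := by
      funext t; exact hu.pderivX_eq s₀ t
    rw [e1]
    have hcurve : HasDerivAt (fun t : ℝ => (s₀, t)) ((0 : ℝ), (1 : ℝ)) x :=
      (hasDerivAt_const x s₀).prodMk (hasDerivAt_id x)
    have h2 : HasDerivAt (fun t : ℝ => D (s₀, t)) (D2 (0, 1)) x :=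
      hDd.comp_hasDerivAt x hcurve
    have h3 : HasDerivAt (fun t : ℝ => D (s₀, t) (1, 0)) (D2 (0, 1) (1, 0)) x := by
      have := h2.clm_apply (hasDerivAt_const x ((1 : ℝ), (0 : ℝ)))
      simpa using this
    exact h3.deriv
  rw [hL, hR, hsymm]

end Smooth2


lemma Smooth2.hasDerivAt_integral {K : ℝ → ℝ → ℝ} (hK : Smooth2 K) (a b x₀ : ℝ) :
    HasDerivAt (fun x => ∫ t in a..b, K x t) (∫ t in a..b, pderivX K x₀ t) x₀ := by
  have h0 := (hasFDerivAt_parametric_integral (K := fun q : ℝ × ℝ => K q.1 q.2) hK a b x₀).hasDerivAt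
  have hL : Continuous fun t =>
      (fderiv ℝ (fun q : ℝ × ℝ => K q.1 q.2) (x₀, t)).comp (ContinuousLinearMap.inl ℝ ℝ ℝ) :=
    Continuous.clm_comp (hK.fderiv_smooth.continuous.comp (continuous_const.prodMk continuous_id))
      continuous_const
  rw [ContinuousLinearMap.intervalIntegral_apply (hL.intervalIntegrable a b)] at h0
  have : (fun t => ((fderiv ℝ (fun q : ℝ × ℝ => K q.1 q.2) (x₀, t)).comp
      (ContinuousLinearMap.inl ℝ ℝ ℝ)) 1) = fun t => pderivX K x₀ t := by
    funext t
    rw [hK.pderivX_eq x₀ t]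
    simp
  rwa [this] at h0

lemma Smooth2.deriv_integral {K : ℝ → ℝ → ℝ} (hK : Smooth2 K) (a b x₀ : ℝ) :
    deriv (fun x => ∫ t in a..b, K x t) x₀ = ∫ t in a..b, pderivX K x₀ t :=
  (hK.hasDerivAt_integral a b x₀).deriv


theorem forward_dir (a : ℝ → ℝ → ℝ) (ha : Smooth2 a) (f : ℝ → ℝ)
    (A F : ℝ → ℝ → ℝ → ℝ)
    (hA : ContDiff ℝ (⊤ : ℕ∞) (fun p : ℝ × ℝ × ℝ => A p.1 p.2.1 p.2.2))
    (hF : ContDiff ℝ (⊤ : ℕ∞) (fun p : ℝ × ℝ × ℝ => F p.1 p.2.1 p.2.2))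
    (hFp : ∀ s : ℝ, Biperiodic (F s))
    (hA0 : ∀ x y : ℝ, A 0 x y = 0) (hF0 : ∀ x y : ℝ, F 0 x y = 0)
    (hA1 : ∀ x y : ℝ, deriv (fun s => A s x y) 0 = a x y)
    (hF1 : ∀ x y : ℝ, deriv (fun s => F s x y) 0 = f x)
    (hPDE : ∀ s x y : ℝ, pderivY (F s) x y = F s x y * pderivX (A s) x y) :
    ∀ x : ℝ, f x * deriv (fun t => ∫ y in (0:ℝ)..(2 * π), a t y) x = 0 := by
  intro x
  -- u, v, Ψ
  set u : ℝ → ℝ → ℝ := fun s y => F s x y with hu_def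
  have hu : Smooth2 u := by
    exact hF.comp ((contDiff_fst.prodMk (contDiff_const.prodMk contDiff_snd)) :
      ContDiff ℝ (⊤ : ℕ∞) (fun q : ℝ × ℝ => (q.1, x, q.2)))
  set v : ℝ → ℝ → ℝ := fun s y => pderivX (A s) x y with hv_def
  have hv_eq : ∀ s y : ℝ, v s y =
      fderiv ℝ (fun p : ℝ × ℝ × ℝ => A p.1 p.2.1 p.2.2) (s, x, y) (0, 1, 0) := by
    intro s y
    have hcurve : HasDerivAt (fun t : ℝ => (s, t, y)) ((0 : ℝ), (1 : ℝ), (0 : ℝ)) x :=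
      (hasDerivAt_const x s).prodMk ((hasDerivAt_id x).prodMk (hasDerivAt_const x y))
    have hd : HasDerivAt (fun t => A s t y)
        (fderiv ℝ (fun p : ℝ × ℝ × ℝ => A p.1 p.2.1 p.2.2) (s, x, y) (0, 1, 0)) x :=
      (((hA.differentiable (by simp)) (s, x, y)).hasFDerivAt.comp_hasDerivAt x
        hcurve :)
    exact hd.deriv.symm ▸ rfl
  have hv : Smooth2 v := by
    unfold Smooth2
    have : (fun p : ℝ × ℝ => v p.1 p.2) = fun p : ℝ × ℝ =>
        fderiv ℝ (fun p : ℝ × ℝ × ℝ => A p.1 p.2.1 p.2.2) (p.1, x, p.2) (0, 1, 0) := by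
      funext p; exact hv_eq p.1 p.2
    rw [this]
    exact ContDiff.clm_apply
      ((hA.fderiv_right (m := (⊤ : ℕ∞)) (by exact_mod_cast le_rfl)).comp
        (contDiff_fst.prodMk (contDiff_const.prodMk contDiff_snd))) contDiff_const
  set Ψ : ℝ → ℝ → ℝ := fun s y => u s y * v s y with hΨ_def
  have hΨ : Smooth2 Ψ := hu.mul hv
  -- Step A
  have stepA : ∀ s : ℝ, (∫ y in (0:ℝ)..(2 * π), Ψ s y) = 0 := by
    intro s
    have hderiv : ∀ y ∈ Set.uIcc (0:ℝ) (2 * π), HasDerivAt (fun t => F s x t) (Ψ s y) y := by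
      intro y _
      have h1 : HasDerivAt (fun t => F s x t) (pderivY (F s) x y) y :=
        hu.hasDerivAt_pderivY s y
      rw [hPDE s x y] at h1
      exact h1
    have hint : IntervalIntegrable (fun y => Ψ s y) volume 0 (2 * π) :=
      (hΨ.contY s).intervalIntegrable 0 (2 * π)
    have := intervalIntegral.integral_eq_sub_of_hasDerivAt hderiv hint
    rw [this]
    have h2 := (hFp s x 0).2
    rw [zero_add] at h2
    rw [h2, sub_self]
  -- Step B
  have stepB : ∀ s : ℝ, (∫ y in (0:ℝ)..(2 * π), pderivX Ψ s y) = 0 := by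
    intro s
    have h1 := hΨ.hasDerivAt_integral 0 (2 * π) s
    have h2 : (fun s' => ∫ y in (0:ℝ)..(2 * π), Ψ s' y) = fun _ => (0:ℝ) :=
      funext fun s' => stepA s'
    rw [h2] at h1
    exact h1.unique (hasDerivAt_const s 0)
  -- Step C
  set Ψ₁ : ℝ → ℝ → ℝ := pderivX Ψ with hΨ₁_def
  have hΨ₁ : Smooth2 Ψ₁ := hΨ.pderivX_smooth
  have stepC : (∫ y in (0:ℝ)..(2 * π), pderivX Ψ₁ 0 y) = 0 := by
    have h1 := hΨ₁.hasDerivAt_integral 0 (2 * π) 0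
    have h2 : (fun s' => ∫ y in (0:ℝ)..(2 * π), Ψ₁ s' y) = fun _ => (0:ℝ) :=
      funext fun s' => stepB s'
    rw [h2] at h1
    exact h1.unique (hasDerivAt_const 0 0)
  -- Step D : compute pderivX Ψ₁ 0 y
  have stepD : ∀ y : ℝ, pderivX Ψ₁ 0 y = 2 * (f x * pderivX a x y) := by
    intro y
    set us : ℝ → ℝ → ℝ := pderivX u with hus_def
    set vs : ℝ → ℝ → ℝ := pderivX v with hvs_def
    have hus : Smooth2 us := hu.pderivX_smooth
    have hvs : Smooth2 vs := hv.pderivX_smooth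
    have hΨ₁eq : (fun s => Ψ₁ s y) = fun s => us s y * v s y + u s y * vs s y := by
      funext s
      exact ((hu.hasDerivAt_pderivX s y).mul (hv.hasDerivAt_pderivX s y)).deriv
    have hder : HasDerivAt (fun s => us s y * v s y + u s y * vs s y)
        ((pderivX us 0 y * v 0 y + us 0 y * pderivX v 0 y) +
          (pderivX u 0 y * vs 0 y + u 0 y * pderivX vs 0 y)) 0 :=
      ((hus.hasDerivAt_pderivX 0 y).mul (hv.hasDerivAt_pderivX 0 y)).add
        ((hu.hasDerivAt_pderivX 0 y).mul (hvs.hasDerivAt_pderivX 0 y))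
    have h0 : pderivX Ψ₁ 0 y =
        (pderivX us 0 y * v 0 y + us 0 y * pderivX v 0 y) +
          (pderivX u 0 y * vs 0 y + u 0 y * pderivX vs 0 y) := by
      show deriv (fun s => Ψ₁ s y) 0 = _
      rw [hΨ₁eq]
      exact hder.deriv
    -- values at 0
    have hu0 : u 0 y = 0 := hF0 x y
    have hv0 : v 0 y = 0 := by
      show deriv (fun t => A 0 t y) x = 0
      have : (fun t => A 0 t y) = fun _ => (0:ℝ) := funext fun t => hA0 t y
      rw [this, deriv_const]
    have hus0 : us 0 y = f x := hF1 x y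
    -- Clairaut for the v_s term
    have hclair : pderivX v 0 y = pderivX a x y := by
      set g : ℝ → ℝ → ℝ := fun s t => A s t y with hg_def
      have hg : Smooth2 g :=
        hA.comp (contDiff_fst.prodMk (contDiff_snd.prodMk contDiff_const))
      have h1 : pderivX v 0 y = deriv (fun s => deriv (fun t => g s t) x) 0 := rfl
      rw [h1, hg.deriv_swap 0 x]
      have h2 : (fun t => deriv (fun s => g s t) 0) = fun t => a t y :=
        funext fun t => hA1 t y
      rw [h2]
      rfl
    rw [h0, hu0, hv0, hus0, hclair]
    have : pderivX u 0 y = f x := hF1 x y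
    rw [this]
    have hvs0 : vs 0 y = pderivX a x y := hclair
    rw [hvs0]
    ring
  -- Step E : conclude
  have hint2 : (∫ y in (0:ℝ)..(2 * π), pderivX Ψ₁ 0 y) =
      2 * f x * ∫ y in (0:ℝ)..(2 * π), pderivX a x y := by
    have : (fun y => pderivX Ψ₁ 0 y) = fun y => (2 * f x) * pderivX a x y := by
      funext y; rw [stepD y]; ring
    rw [this, intervalIntegral.integral_const_mul]
  rw [hint2] at stepC
  rw [ha.deriv_integral 0 (2 * π) x]
  linarith


theorem backward_dir (a : ℝ → ℝ → ℝ) (ha : Smooth2 a) (hap : Biperiodic a)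
    (f : ℝ → ℝ) (hf : ContDiff ℝ (⊤ : ℕ∞) f) (hfp : Periodic2pi f)
    (hcond : ∀ x : ℝ, f x * deriv (fun t => ∫ y in (0:ℝ)..(2 * π), a t y) x = 0) :
    (∃ A F : ℝ → ℝ → ℝ → ℝ,
      ContDiff ℝ (⊤ : ℕ∞) (fun p : ℝ × ℝ × ℝ => A p.1 p.2.1 p.2.2) ∧
      ContDiff ℝ (⊤ : ℕ∞) (fun p : ℝ × ℝ × ℝ => F p.1 p.2.1 p.2.2) ∧
      (∀ s : ℝ, Biperiodic (A s)) ∧ (∀ s : ℝ, Biperiodic (F s)) ∧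
      (∀ x y : ℝ, A 0 x y = 0) ∧ (∀ x y : ℝ, F 0 x y = 0) ∧
      (∀ x y : ℝ, deriv (fun s => A s x y) 0 = a x y) ∧
      (∀ x y : ℝ, deriv (fun s => F s x y) 0 = f x) ∧
      (∀ s x y : ℝ, pderivY (F s) x y = F s x y * pderivX (A s) x y)) := by
  have hax : Smooth2 (pderivX a) := ha.pderivX_smooth
  -- periodicity of pderivX a
  have haxpx : ∀ x t : ℝ, pderivX a (x + 2 * π) t = pderivX a x t := by
    intro x t
    show deriv (fun s => a s t) (x + 2 * π) = deriv (fun s => a s t) x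
    rw [← deriv_comp_add_const (fun s => a s t) (2 * π)]
    congr 1
    funext s
    exact (hap s t).1
  have haxpy : ∀ x t : ℝ, pderivX a x (t + 2 * π) = pderivX a x t := by
    intro x t
    show deriv (fun s => a s (t + 2 * π)) x = deriv (fun s => a s t) x
    congr 1
    funext s
    exact (hap s t).2
  -- h(x,y) = ∫_0^y a_x(x,t) dt
  set h : ℝ → ℝ → ℝ := fun x y => ∫ t in (0:ℝ)..y, pderivX a x t with hh_def
  have hh : Smooth2 h := by
    have key : ∀ x y : ℝ, h x y = y * ∫ u in (0:ℝ)..1, pderivX a x (u * y) := by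
      intro x y
      have := intervalIntegral.smul_integral_comp_mul_right (a := (0:ℝ)) (b := (1:ℝ))
        (f := fun t => pderivX a x t) y
      simp only [smul_eq_mul, zero_mul, one_mul] at this
      rw [hh_def]
      exact this.symm
    have hK : ContDiff ℝ (⊤ : ℕ∞) fun q : (ℝ × ℝ) × ℝ => pderivX a q.1.1 (q.2 * q.1.2) :=
      hax.comp ((contDiff_fst.comp contDiff_fst).prodMk
        (contDiff_snd.mul (contDiff_snd.comp contDiff_fst)))
    have hsm : ContDiff ℝ (⊤ : ℕ∞) fun p : ℝ × ℝ =>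
        p.2 * ∫ u in (0:ℝ)..1, pderivX a p.1 (u * p.2) := by
      exact (contDiff_snd).mul (contDiff_parametric_integral hK 0 1)
    unfold Smooth2
    have : (fun p : ℝ × ℝ => h p.1 p.2) = fun p : ℝ × ℝ =>
        p.2 * ∫ u in (0:ℝ)..1, pderivX a p.1 (u * p.2) := by
      funext p; exact key p.1 p.2
    rw [this]; exact hsm
  -- FTC : derivative of h in y
  have hhy : ∀ x y : ℝ, HasDerivAt (fun t => h x t) (pderivX a x y) y := fun x y =>
    ((hax.contY x).integral_hasStrictDerivAt 0 y).hasDerivAt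
  -- periodicity of h in x
  have hhpx : ∀ x y : ℝ, h (x + 2 * π) y = h x y := by
    intro x y
    rw [hh_def]
    apply intervalIntegral.integral_congr
    intro t _
    exact haxpx x t
  -- quasi-periodicity of h in y
  set gI : ℝ → ℝ := fun x => ∫ t in (0:ℝ)..(2 * π), pderivX a x t with hgI_def
  have hhpy : ∀ x y : ℝ, h x (y + 2 * π) = h x y + gI x := by
    intro x y
    have hadd := intervalIntegral.integral_add_adjacent_intervals
      (μ := volume) (a := (0:ℝ)) (b := y) (c := y + 2 * π)
      ((hax.contY x).intervalIntegrable 0 y) ((hax.contY x).intervalIntegrable y (y + 2 * π))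
    have hper : Function.Periodic (fun t => pderivX a x t) (2 * π) := fun t => haxpy x t
    have h2 : (∫ t in y..(y + 2 * π), pderivX a x t) = gI x := by
      have := hper.intervalIntegral_add_eq y 0
      rw [zero_add] at this
      exact this
    rw [hh_def]
    show (∫ t in (0:ℝ)..(y + 2 * π), pderivX a x t) = _
    rw [← hadd, h2]
  -- the condition gives f x * gI x = 0
  have hfg : ∀ x : ℝ, f x * gI x = 0 := by
    intro x
    have := hcond x
    rwa [ha.deriv_integral 0 (2 * π) x] at this
  -- define A and F
  refine ⟨fun s x y => s * a x y, fun s x y => s * f x * Real.exp (s * h x y),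
    ?_, ?_, ?_, ?_, ?_, ?_, ?_, ?_, ?_⟩
  · exact contDiff_fst.mul (ha.comp contDiff_snd)
  · exact ((contDiff_fst.mul (hf.comp (contDiff_fst.comp contDiff_snd))).mul
      (Real.contDiff_exp.comp (contDiff_fst.mul (hh.comp contDiff_snd))))
  · intro s x y
    refine ⟨?_, ?_⟩
    · show s * a (x + 2 * π) y = s * a x y
      rw [(hap x y).1]
    · show s * a x (y + 2 * π) = s * a x y
      rw [(hap x y).2]
  · intro s x y
    constructor
    · show s * f (x + 2 * π) * Real.exp (s * h (x + 2 * π) y) = s * f x * Real.exp (s * h x y)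
      rw [hfp x, hhpx x y]
    · show s * f x * Real.exp (s * h x (y + 2 * π)) = s * f x * Real.exp (s * h x y)
      rw [hhpy x y]
      rcases mul_eq_zero.1 (hfg x) with h0 | h0
      · rw [h0]; ring
      · rw [h0, add_zero]
  · intro x y; show (0:ℝ) * a x y = 0; ring
  · intro x y; show (0:ℝ) * f x * Real.exp (0 * h x y) = 0; ring
  · intro x y
    exact (hasDerivAt_mul_const (a x y)).deriv
  · intro x y
    have h1 : HasDerivAt (fun s : ℝ => s * f x) (f x) 0 := hasDerivAt_mul_const (f x)
    have h2 : HasDerivAt (fun s : ℝ => Real.exp (s * h x y))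
        (Real.exp (0 * h x y) * h x y) 0 := (hasDerivAt_mul_const (h x y)).exp
    have h3 : HasDerivAt (fun s : ℝ => s * f x * Real.exp (s * h x y)) _ 0 := h1.mul h2
    have := h3.deriv
    rw [this]
    simp
  · intro s x y
    have hF' : HasDerivAt (fun t => s * f x * Real.exp (s * h x t))
        (s * f x * (Real.exp (s * h x y) * (s * pderivX a x y))) y := by
      have h1 : HasDerivAt (fun t => s * h x t) (s * pderivX a x y) y :=
        (hhy x y).const_mul s
      exact (h1.exp).const_mul (s * f x)
    have hlhs : pderivY (fun x y => s * f x * Real.exp (s * h x y)) x y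
        = s * f x * (Real.exp (s * h x y) * (s * pderivX a x y)) := hF'.deriv
    have hrhs : pderivX (fun x y => s * a x y) x y = s * pderivX a x y := by
      show deriv (fun t => s * a t y) x = _
      exact ((ha.hasDerivAt_pderivX x y).const_mul s).deriv
    rw [hlhs, hrhs]
    ring


/-- A first order deformation `(a, f)` extends to a smooth path of solutions iff
`f(x) · (d/dx)(∫₀^{2π} a(x,y) dy) = 0` for all `x`. -/
theorem extendable_iff_derivative_vanishes (a : ℝ → ℝ → ℝ) (ha : Smooth2 a)
    (hap : Biperiodic a) (f : ℝ → ℝ) (hf : ContDiff ℝ (⊤ : ℕ∞) f) (hfp : Periodic2pi f) :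
    (∃ A F : ℝ → ℝ → ℝ → ℝ,
      ContDiff ℝ (⊤ : ℕ∞) (fun p : ℝ × ℝ × ℝ => A p.1 p.2.1 p.2.2) ∧
      ContDiff ℝ (⊤ : ℕ∞) (fun p : ℝ × ℝ × ℝ => F p.1 p.2.1 p.2.2) ∧
      (∀ s : ℝ, Biperiodic (A s)) ∧ (∀ s : ℝ, Biperiodic (F s)) ∧
      (∀ x y : ℝ, A 0 x y = 0) ∧ (∀ x y : ℝ, F 0 x y = 0) ∧
      (∀ x y : ℝ, deriv (fun s => A s x y) 0 = a x y) ∧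
      (∀ x y : ℝ, deriv (fun s => F s x y) 0 = f x) ∧
      (∀ s x y : ℝ, pderivY (F s) x y = F s x y * pderivX (A s) x y)) ↔
    (∀ x : ℝ, f x * deriv (fun t => ∫ y in (0:ℝ)..(2 * π), a t y) x = 0) := by
  constructor
  · rintro ⟨A, F, hA, hF, hAp, hFp, hA0, hF0, hA1, hF1, hPDE⟩
    exact forward_dir a ha f A F hA hF hFp hA0 hF0 hA1 hF1 hPDE
  · intro hcond
    exact backward_dir a ha hap f hf hfp hcond
end
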